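/- arXiv:2404.00295 — 4 statements merged into one kernel-verified Lean document; each statement's English description precedes it below -/
import Mathlib

section
/- Let p ≥ 2 and m ≥ 1 be integers, let a_1,…,a_p ∈ ℂ, and let b_{j,k} ∈ ℂ for 1 ≤ j ≤ p−1, 1 ≤ k ≤ m with no b_{j,k} a nonpositive integer. For n = (n_1,…,n_m) ∈ ℕ^m set A_n = (∏_{i=1}^p (a_i)_{n_1+⋯+n_m}) / (∏_{k=1}^m (b_{1,k})_{n_k}⋯(b_{p−1,k})_{n_k}·n_k!). Then for every x = (x_1,…,x_m) ∈ ℂ^m with |x_1|^{1/p} + ⋯ + |x_m|^{1/p} < 1, the family (A_n·x_1^{n_1}⋯x_m^{n_m})_{n ∈ ℕ^m} is absolutely summable. -/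
set_option maxHeartbeats 1000000
open Finset


lemma aux_norm_ascPochhammer_le (z : ℂ) (N : ℕ) :
    ‖(ascPochhammer ℂ N).eval z‖ ≤ (ascPochhammer ℝ N).eval ‖z‖ := by
  induction N with
  | zero => simp
  | succ n ih =>
    rw [ascPochhammer_succ_eval, ascPochhammer_succ_eval]
    calc ‖(ascPochhammer ℂ n).eval z * (z + n)‖
        = ‖(ascPochhammer ℂ n).eval z‖ * ‖z + (n:ℂ)‖ := norm_mul _ _
      _ ≤ (ascPochhammer ℝ n).eval ‖z‖ * (‖z‖ + n) := by
          exact mul_le_mul ih ((norm_add_le _ _).trans (by simp)) (norm_nonneg _)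
            ((norm_nonneg _).trans ih)

lemma aux_ascPochhammer_mono {X Y : ℝ} (h0 : 0 ≤ X) (h : X ≤ Y) (N : ℕ) :
    (ascPochhammer ℝ N).eval X ≤ (ascPochhammer ℝ N).eval Y := by
  induction N with
  | zero => simp
  | succ n ih =>
    rw [ascPochhammer_succ_eval, ascPochhammer_succ_eval]
    have h1 : (0:ℝ) ≤ (ascPochhammer ℝ n).eval X := by
      rcases eq_or_lt_of_le h0 with h'|h'
      · cases n with
        | zero => simp
        | succ k => simp [← h', ascPochhammer_ne_zero_eval_zero]
      · exact (ascPochhammer_pos n X h').le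
    exact mul_le_mul ih (by linarith) (by linarith) (h1.trans ih)

lemma aux_factorial_add_le (J N : ℕ) : (N + J).factorial ≤ N.factorial * (N + J + 1) ^ J := by
  induction J with
  | zero => simp
  | succ j ih =>
    calc (N + (j+1)).factorial = (N + j).factorial * (N + j + 1) := by
          rw [← Nat.add_assoc, Nat.factorial_succ, Nat.mul_comm]
      _ ≤ N.factorial * (N + j + 1) ^ j * (N + j + 1) := Nat.mul_le_mul_right _ ih
      _ = N.factorial * (N + j + 1) ^ (j + 1) := by ring
      _ ≤ N.factorial * (N + (j+1) + 1) ^ (j+1) := by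
          apply Nat.mul_le_mul_left
          exact Nat.pow_le_pow_left (by omega) _

lemma aux_ascFactorial_le (M N : ℕ) (hM : 1 ≤ M) :
    M.ascFactorial N ≤ N.factorial * (N + M) ^ M := by
  have h1 : (M - 1).factorial * M.ascFactorial N = (M + N - 1).factorial :=
    Nat.factorial_mul_ascFactorial' M N (by omega)
  have h2 : M.ascFactorial N ≤ (M + N - 1).factorial := by
    calc M.ascFactorial N ≤ (M-1).factorial * M.ascFactorial N :=
          Nat.le_mul_of_pos_left _ (Nat.factorial_pos _)
      _ = _ := h1
  have h3 : M + N - 1 = N + (M - 1) := by omega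
  calc M.ascFactorial N ≤ (N + (M-1)).factorial := by rw [← h3]; exact h2
    _ ≤ N.factorial * (N + (M-1) + 1) ^ (M-1) := aux_factorial_add_le _ _
    _ ≤ N.factorial * (N + M) ^ M := by
        apply Nat.mul_le_mul_left
        calc (N + (M-1) + 1) ^ (M-1) = (N + M) ^ (M-1) := by congr 1; omega
          _ ≤ (N + M) ^ M := Nat.pow_le_pow_right (by omega) (by omega)

lemma aux_eval_prod (z : ℂ) (n : ℕ) :
    (ascPochhammer ℂ n).eval z = ∏ i ∈ Finset.range n, (z + i) := by
  induction n with
  | zero => simp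
  | succ k ih => rw [ascPochhammer_succ_eval, ih, Finset.prod_range_succ]

lemma aux_fact_le (K : ℕ) : ∀ n : ℕ, K ≤ n → n.factorial ≤ (n - K).factorial * (n+1)^K := by
  induction K with
  | zero => simp
  | succ k ih =>
    intro n hn
    have h1 := ih n (by omega)
    have h2 : n - k = (n - (k+1)) + 1 := by omega
    calc n.factorial ≤ (n - k).factorial * (n+1)^k := h1
      _ = (n - (k+1)).factorial * (n - k) * (n+1)^k := by
          rw [h2, Nat.factorial_succ, ← h2, Nat.mul_comm (n-k)]
      _ ≤ (n - (k+1)).factorial * (n+1) * (n+1)^k := by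
          apply Nat.mul_le_mul_right; exact Nat.mul_le_mul_left _ (by omega)
      _ = (n - (k+1)).factorial * (n+1)^(k+1) := by ring

lemma aux_poch_lower (b : ℂ) (hb : ∀ n : ℕ, b ≠ -(n:ℂ)) :
    ∃ c : ℝ, 0 < c ∧ ∃ K : ℕ, ∀ n : ℕ,
      c * n.factorial ≤ ‖(ascPochhammer ℂ n).eval b‖ * (n+1)^K := by
  set K : ℕ := ⌈‖b‖⌉₊ + 1 with hK
  have hbK : ‖b‖ ≤ (K : ℝ) - 1 := by
    have := Nat.le_ceil ‖b‖; push_cast [hK]; push_cast at this; linarith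
  have hne : ∀ i : ℕ, b + (i:ℂ) ≠ 0 := by
    intro i h
    exact hb i (by linear_combination h)
  have hpos : ∀ n : ℕ, 0 < ‖(ascPochhammer ℂ n).eval b‖ := by
    intro n
    rw [aux_eval_prod, norm_prod]
    exact Finset.prod_pos fun i _ => norm_pos_iff.2 (hne i)
  -- lower bound for each factor with index ≥ K
  have hfac : ∀ i : ℕ, ((i:ℝ) + 1) ≤ ‖b + ((K + i : ℕ) : ℂ)‖ := by
    intro i
    have h1 : ‖((K + i : ℕ) : ℂ)‖ - ‖b‖ ≤ ‖b + ((K + i : ℕ) : ℂ)‖ := by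
      have h := norm_add_le (b + ((K + i : ℕ) : ℂ)) (-b)
      simp only [add_neg_cancel_comm, norm_neg] at h
      linarith
    have h2 : ‖((K + i : ℕ) : ℂ)‖ = (K : ℝ) + i := by
      rw [Complex.norm_natCast]; push_cast; ring
    rw [h2] at h1; linarith
  set c1 : ℝ := ‖(ascPochhammer ℂ K).eval b‖ with hc1
  have hc1pos : 0 < c1 := hpos K
  -- main estimate for n ≥ K
  have hmain : ∀ n : ℕ, K ≤ n → c1 * n.factorial ≤ ‖(ascPochhammer ℂ n).eval b‖ * (n+1)^K := by
    intro n hn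
    have hsplit : ‖(ascPochhammer ℂ n).eval b‖ = c1 * ∏ i ∈ range (n - K), ‖b + ((K + i : ℕ) : ℂ)‖ := by
      rw [aux_eval_prod, norm_prod, hc1, aux_eval_prod, norm_prod]
      have hn' : n = K + (n - K) := by omega
      conv_lhs => rw [hn']
      rw [Finset.prod_range_add]
    have hstep : ((n - K).factorial : ℝ) ≤ ∏ i ∈ range (n - K), ‖b + ((K + i : ℕ) : ℂ)‖ := by
      have hcast : ((n-K).factorial : ℝ) = ∏ i ∈ range (n-K), ((i:ℝ)+1) := by
        rw [← Finset.prod_range_add_one_eq_factorial]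
        push_cast
        rfl
      rw [hcast]
      exact Finset.prod_le_prod (fun i _ => by positivity) (fun i _ => hfac i)
    have hfle : (n.factorial : ℝ) ≤ ((n - K).factorial : ℝ) * ((n:ℝ)+1)^K := by
      have := aux_fact_le K n hn
      push_cast at this ⊢
      exact_mod_cast this
    calc c1 * n.factorial ≤ c1 * (((n - K).factorial : ℝ) * ((n:ℝ)+1)^K) := by
          apply mul_le_mul_of_nonneg_left hfle hc1pos.le
      _ = (c1 * ((n - K).factorial : ℝ)) * ((n:ℝ)+1)^K := by ring
      _ ≤ ‖(ascPochhammer ℂ n).eval b‖ * ((n:ℝ)+1)^K := by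
          apply mul_le_mul_of_nonneg_right _ (by positivity)
          rw [hsplit]
          exact mul_le_mul_of_nonneg_left hstep hc1pos.le
  -- take min with small n values
  set c2 : ℝ := (Finset.range K).inf' ⟨0, by simp [hK]⟩
      (fun n => ‖(ascPochhammer ℂ n).eval b‖ * ((n:ℝ)+1)^K / n.factorial) with hc2
  have hc2pos : 0 < c2 := by
    rw [hc2]
    apply (Finset.lt_inf'_iff _).2
    intro i _
    have := hpos i
    positivity
  refine ⟨min c1 c2, lt_min hc1pos hc2pos, K, fun n => ?_⟩
  rcases le_or_gt K n with h | h
  · exact le_trans (mul_le_mul_of_nonneg_right (min_le_left _ _) (by positivity)) (hmain n h)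
  · have hle : c2 ≤ ‖(ascPochhammer ℂ n).eval b‖ * ((n:ℝ)+1)^K / n.factorial :=
      Finset.inf'_le _ (Finset.mem_range.2 h)
    have hf : (0:ℝ) < n.factorial := by exact_mod_cast Nat.factorial_pos n
    calc min c1 c2 * n.factorial ≤ c2 * n.factorial := by
          apply mul_le_mul_of_nonneg_right (min_le_right _ _) hf.le
      _ ≤ (‖(ascPochhammer ℂ n).eval b‖ * ((n:ℝ)+1)^K / n.factorial) * n.factorial := by
          apply mul_le_mul_of_nonneg_right hle hf.le
      _ = ‖(ascPochhammer ℂ n).eval b‖ * ((n:ℝ)+1)^K := by field_simp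
      _ = ‖(ascPochhammer ℂ n).eval b‖ * ((n:ℝ)+1)^K := by norm_num

lemma aux_multinomial_le (m : ℕ) (t : Fin m → ℝ) (ht : ∀ k, 0 ≤ t k) (n : Fin m → ℕ) :
    (Nat.multinomial Finset.univ n : ℝ) * ∏ k, t k ^ n k ≤ (∑ k, t k) ^ (∑ k, n k) := by
  rw [Finset.sum_pow_eq_sum_piAntidiag Finset.univ t (∑ k, n k)]
  have hmem : n ∈ Finset.piAntidiag Finset.univ (∑ k, n k) := by
    rw [Finset.mem_piAntidiag]; exact ⟨rfl, fun i _ => Finset.mem_univ i⟩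
  exact Finset.single_le_sum (f := fun k => (Nat.multinomial Finset.univ k : ℝ) * ∏ i, t i ^ k i)
    (fun k _ => mul_nonneg (Nat.cast_nonneg _)
      (Finset.prod_nonneg fun i _ => pow_nonneg (ht i) _)) hmem

lemma aux_summable_nat (D E : ℕ) (hD : 1 ≤ D) (q : ℝ) (h0 : 0 < q) (h1 : q < 1) :
    Summable (fun N : ℕ => ((N + D : ℕ) : ℝ) ^ E * q ^ N) := by
  have hq : ‖q‖ < 1 := by rw [Real.norm_eq_abs, abs_of_pos h0]; exact h1
  have hs : Summable (fun n : ℕ => (n : ℝ) ^ E * q ^ n) :=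
    summable_pow_mul_geometric_of_norm_lt_one E hq
  have hs1 : Summable (fun n : ℕ => ((n + 1 : ℕ) : ℝ) ^ E * q ^ (n + 1)) :=
    hs.comp_injective Nat.succ_injective
  have hs2 : Summable (fun n : ℕ => (((n + 1 : ℕ) : ℝ) ^ E * q ^ n) * ((D:ℝ)^E)) := by
    have := (hs1.mul_right (q⁻¹ * (D:ℝ)^E))
    exact this.congr fun n => by
      linear_combination (((n + 1 : ℕ) : ℝ) ^ E * q ^ n * (D:ℝ)^E) * mul_inv_cancel₀ h0.ne'
  apply hs2.of_nonneg_of_le (fun n => by positivity)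
  intro n
  have : ((n + D : ℕ) : ℝ) ^ E ≤ ((n+1:ℕ):ℝ)^E * (D:ℝ)^E := by
    rw [← mul_pow]
    apply pow_le_pow_left₀ (by positivity)
    push_cast
    have hD' : (1:ℝ) ≤ (D:ℝ) := by exact_mod_cast hD
    have hn' : (0:ℝ) ≤ (n:ℝ) := Nat.cast_nonneg n
    nlinarith
  calc ((n + D : ℕ) : ℝ) ^ E * q ^ n ≤ (((n+1:ℕ):ℝ)^E * (D:ℝ)^E) * q ^ n := by
        apply mul_le_mul_of_nonneg_right this (by positivity)
    _ = ((n + 1 : ℕ) : ℝ) ^ E * q ^ n * (D:ℝ)^E := by ring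

lemma aux_summable_pi (m D E : ℕ) (hD : 1 ≤ D) (q : ℝ) (h0 : 0 < q) (h1 : q < 1) :
    Summable (fun n : Fin m → ℕ => (((∑ k, n k) + D : ℕ) : ℝ) ^ E * q ^ (∑ k, n k)) := by
  induction m with
  | zero => exact .of_finite
  | succ m ih =>
    refine ((Fin.consEquiv (fun _ : Fin (m+1) => ℕ)).summable_iff).mp ?_
    have htarget : Summable (fun z : ℕ × (Fin m → ℕ) =>
        (((z.1 + D : ℕ) : ℝ) ^ E * q ^ z.1) *
        ((((∑ k, z.2 k) + D : ℕ) : ℝ) ^ E * q ^ (∑ k, z.2 k))) := by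
      apply (aux_summable_nat D E hD q h0 h1).mul_of_nonneg ih
      · intro N; dsimp only; positivity
      · intro n; dsimp only; positivity
    apply htarget.of_nonneg_of_le
    · intro z; dsimp only [Function.comp_apply]; positivity
    rintro ⟨N1, ν⟩
    simp only [Function.comp_apply, Fin.consEquiv_apply, Fin.sum_cons]
    have h2 : (((N1 + ∑ k, ν k) + D : ℕ) : ℝ) ^ E ≤
        (((N1 + D) * ((∑ k, ν k) + D) : ℕ) : ℝ) ^ E := by
      apply pow_le_pow_left₀ (by positivity)
      push_cast
      have hD' : (1:ℝ) ≤ (D:ℝ) := by exact_mod_cast hD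
      have ha : (0:ℝ) ≤ (N1:ℝ) := Nat.cast_nonneg _
      have hb : (0:ℝ) ≤ ∑ x : Fin m, ((ν x : ℕ):ℝ) :=
        Finset.sum_nonneg fun i _ => Nat.cast_nonneg _
      nlinarith
    calc (((N1 + ∑ k, ν k) + D : ℕ) : ℝ) ^ E * q ^ (N1 + ∑ k, ν k)
        ≤ (((N1 + D) * ((∑ k, ν k) + D) : ℕ) : ℝ) ^ E * q ^ (N1 + ∑ k, ν k) := by
          apply mul_le_mul_of_nonneg_right h2 (by positivity)
      _ = (((N1 + D : ℕ) : ℝ) ^ E * q ^ N1) *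
          ((((∑ k, ν k) + D : ℕ) : ℝ) ^ E * q ^ (∑ k, ν k)) := by
          push_cast
          rw [mul_pow, pow_add]
          ring


open scoped BigOperators

/-- absolute summability of the hypergeometric series `F_C^{p,m}(a,B;x)`
on the domain `|x_1|^{1/p} + ⋯ + |x_m|^{1/p} < 1`. -/
theorem FCpm_summable (p m : ℕ) (hp : 2 ≤ p) (hm : 1 ≤ m)
    (a : Fin p → ℂ) (b : Fin (p - 1) → Fin m → ℂ)
    (hb : ∀ j k, ∀ n : ℕ, b j k ≠ -(n : ℂ))
    (A : (Fin m → ℕ) → ℂ)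
    (hA : ∀ n : Fin m → ℕ,
      A n = (∏ i, (ascPochhammer ℂ (∑ k, n k)).eval (a i)) /
        (∏ k, ((∏ j, (ascPochhammer ℂ (n k)).eval (b j k)) * (Nat.factorial (n k) : ℂ))))
    (x : Fin m → ℂ)
    (hx : ∑ k, ‖x k‖ ^ ((p : ℝ)⁻¹) < 1) :
    Summable (fun n : Fin m → ℕ => ‖A n * ∏ k, x k ^ n k‖) := by
  classical
  have hp0 : p ≠ 0 := by omega
  set t : Fin m → ℝ := fun k => ‖x k‖ ^ ((p : ℝ)⁻¹) with htdef
  have ht0 : ∀ k, 0 ≤ t k := fun k => Real.rpow_nonneg (norm_nonneg _) _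
  have htp : ∀ k, t k ^ p = ‖x k‖ := by
    intro k
    rw [htdef]
    dsimp only
    rw [← Real.rpow_natCast (‖x k‖ ^ ((p:ℝ)⁻¹)) p,
      ← Real.rpow_mul (norm_nonneg _),
      inv_mul_cancel₀ (by exact_mod_cast hp0), Real.rpow_one]
  set s : ℝ := ∑ k, t k with hsdef
  have hs1 : s < 1 := hx
  have hs0 : 0 ≤ s := Finset.sum_nonneg fun k _ => ht0 k
  set r : ℝ := (s + 1) / 2 with hrdef
  have hsr : s ≤ r := by rw [hrdef]; linarith
  have hr1 : r < 1 := by rw [hrdef]; linarith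
  have hr0 : 0 < r := by rw [hrdef]; linarith
  set M : ℕ := 1 + ∑ i, ⌈‖a i‖⌉₊ with hMdef
  have hM1 : 1 ≤ M := by omega
  have hMa : ∀ i, ‖a i‖ ≤ (M : ℝ) := by
    intro i
    have h1 := Nat.le_ceil ‖a i‖
    have h2 : (⌈‖a i‖⌉₊ : ℕ) ≤ ∑ i', ⌈‖a i'‖⌉₊ :=
      Finset.single_le_sum (f := fun i' => ⌈‖a i'‖⌉₊) (fun _ _ => Nat.zero_le _) (mem_univ i)
    have h3 : ((∑ i', ⌈‖a i'‖⌉₊ : ℕ) : ℝ) ≤ (M : ℝ) := by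
      rw [hMdef]; push_cast; linarith
    calc ‖a i‖ ≤ (⌈‖a i‖⌉₊ : ℝ) := h1
      _ ≤ ((∑ i', ⌈‖a i'‖⌉₊ : ℕ) : ℝ) := by exact_mod_cast h2
      _ ≤ (M : ℝ) := h3
  choose c hc K hK using fun j k => aux_poch_lower (b j k) (hb j k)
  set K0 : ℕ := Finset.univ.sup fun j : Fin (p-1) => Finset.univ.sup fun k : Fin m => K j k
    with hK0def
  have hKK : ∀ j k, K j k ≤ K0 := by
    intro j k
    rw [hK0def]
    exact le_trans (Finset.le_sup (f := fun k => K j k) (mem_univ k))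
      (Finset.le_sup (f := fun j => Finset.univ.sup fun k => K j k) (mem_univ j))
  have hK' : ∀ j k (n : ℕ), c j k * n.factorial ≤
      ‖(ascPochhammer ℂ n).eval (b j k)‖ * ((n:ℝ)+1)^K0 := by
    intro j k n
    refine le_trans (hK j k n) ?_
    apply mul_le_mul_of_nonneg_left _ (norm_nonneg _)
    apply pow_le_pow_right₀ _ (hKK j k)
    have : (0:ℝ) ≤ (n:ℝ) := Nat.cast_nonneg n
    linarith
  set c0 : ℝ := ∏ j, ∏ k, c j k with hc0def
  have hc0 : 0 < c0 := Finset.prod_pos fun j _ => Finset.prod_pos fun k _ => hc j k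
  set E : ℕ := p * M + m * (K0 * (p-1)) with hEdef
  set q : ℝ := r ^ p with hqdef
  have hq0 : 0 < q := pow_pos hr0 p
  have hq1 : q < 1 := pow_lt_one₀ hr0.le hr1 hp0
  have hG : Summable (fun n : Fin m → ℕ =>
      c0⁻¹ * (((((∑ k, n k) + M : ℕ)) : ℝ) ^ E * q ^ (∑ k, n k))) :=
    (aux_summable_pi m M E hM1 q hq0 hq1).mul_left _
  apply hG.of_nonneg_of_le (fun n => norm_nonneg _)
  intro n
  set N : ℕ := ∑ k, n k with hNdef
  set num : ℂ := ∏ i, (ascPochhammer ℂ N).eval (a i) with hnumdef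
  set den : ℂ := ∏ k, ((∏ j, (ascPochhammer ℂ (n k)).eval (b j k)) * (Nat.factorial (n k) : ℂ))
    with hdendef
  have hbne : ∀ j k (ν : ℕ), (ascPochhammer ℂ ν).eval (b j k) ≠ 0 := by
    intro j k ν
    rw [aux_eval_prod]
    apply Finset.prod_ne_zero_iff.2
    intro i _ h
    exact hb j k i (by linear_combination h)
  have hden_pos : 0 < ‖den‖ := by
    rw [hdendef, norm_pos_iff]
    apply Finset.prod_ne_zero_iff.2
    intro k _
    exact mul_ne_zero (Finset.prod_ne_zero_iff.2 fun j _ => hbne j k (n k))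
      (Nat.cast_ne_zero.2 (Nat.factorial_ne_zero _))
  have hxn : ‖∏ k, x k ^ n k‖ = ∏ k, ‖x k‖ ^ n k := by
    rw [norm_prod]
    exact Finset.prod_congr rfl fun k _ => by rw [norm_pow]
  have hnorm : ‖A n * ∏ k, x k ^ n k‖ =
      (‖num‖ * ∏ k, ‖x k‖ ^ n k) / ‖den‖ := by
    rw [hA n, ← hnumdef, ← hdendef, norm_mul, norm_div, hxn, div_mul_eq_mul_div]
  rw [hnorm, div_le_iff₀ hden_pos]
  set NM : ℝ := ((N + M : ℕ) : ℝ) with hNMdef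
  have hNM1 : (1:ℝ) ≤ NM := by rw [hNMdef]; exact_mod_cast (by omega : 1 ≤ N + M)
  set F : ℝ := ∏ k, ((n k).factorial : ℝ) with hFdef
  have hF0 : 0 < F := Finset.prod_pos fun k _ => by exact_mod_cast Nat.factorial_pos _
  -- numerator bound
  have hnum : ‖num‖ ≤ ((N.factorial : ℝ) * NM ^ M) ^ p := by
    rw [hnumdef, norm_prod]
    have h1 : ∀ i : Fin p, ‖(ascPochhammer ℂ N).eval (a i)‖ ≤ (M.ascFactorial N : ℝ) := by
      intro i
      calc ‖(ascPochhammer ℂ N).eval (a i)‖ ≤ (ascPochhammer ℝ N).eval ‖a i‖ :=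
            aux_norm_ascPochhammer_le _ _
        _ ≤ (ascPochhammer ℝ N).eval (M : ℝ) :=
            aux_ascPochhammer_mono (norm_nonneg _) (hMa i) N
        _ = (M.ascFactorial N : ℝ) := by
            rw [← ascPochhammer_eval_cast, ascPochhammer_nat_eq_ascFactorial]
    have h2 : (M.ascFactorial N : ℝ) ≤ (N.factorial : ℝ) * NM ^ M := by
      have := aux_ascFactorial_le M N hM1
      calc (M.ascFactorial N : ℝ) ≤ ((N.factorial * (N + M)^M : ℕ) : ℝ) := by exact_mod_cast this
        _ = (N.factorial : ℝ) * NM ^ M := by rw [hNMdef]; push_cast; ring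
    calc ∏ i, ‖(ascPochhammer ℂ N).eval (a i)‖ ≤ ∏ _i : Fin p, ((N.factorial : ℝ) * NM ^ M) :=
          Finset.prod_le_prod (fun i _ => norm_nonneg _) (fun i _ => (h1 i).trans h2)
      _ = ((N.factorial : ℝ) * NM ^ M) ^ p := by
          rw [Finset.prod_const, Finset.card_univ, Fintype.card_fin]
  -- x-product
  have hxprod : ∏ k, ‖x k‖ ^ n k = (∏ k, t k ^ n k) ^ p := by
    rw [← Finset.prod_pow]
    apply Finset.prod_congr rfl
    intro k _
    rw [← htp k, ← pow_mul, ← pow_mul, Nat.mul_comm]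
  -- multinomial bound
  have hmult : (N.factorial : ℝ) * ∏ k, t k ^ n k ≤ s ^ N * F := by
    have hspec : ((N.factorial : ℕ) : ℝ) = F * (Nat.multinomial Finset.univ n : ℝ) := by
      rw [hFdef, ← Nat.cast_prod, ← Nat.cast_mul, Nat.multinomial_spec, hNdef]
    rw [hspec, mul_assoc]
    rw [mul_comm (s ^ N) F]
    apply mul_le_mul_of_nonneg_left _ hF0.le
    exact aux_multinomial_le m t ht0 n
  -- denominator bound
  set P : ℝ := ∏ k, ((n k : ℝ) + 1) ^ (K0 * (p-1)) with hPdef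
  have hnk : ∀ k, (n k : ℝ) + 1 ≤ NM := by
    intro k
    have h1 : n k ≤ N := by
      rw [hNdef]
      exact Finset.single_le_sum (f := fun k => n k) (fun _ _ => Nat.zero_le _) (mem_univ k)
    have h2 : n k + 1 ≤ N + M := by omega
    rw [hNMdef]
    exact_mod_cast h2
  have hP1 : P ≤ NM ^ (m * (K0 * (p-1))) := by
    rw [hPdef]
    calc ∏ k : Fin m, ((n k : ℝ) + 1) ^ (K0 * (p-1))
        ≤ ∏ _k : Fin m, NM ^ (K0 * (p-1)) :=
          Finset.prod_le_prod (fun k _ => by positivity)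
            (fun k _ => pow_le_pow_left₀ (by positivity) (hnk k) _)
      _ = NM ^ (m * (K0 * (p-1))) := by
          rw [Finset.prod_const, Finset.card_univ, Fintype.card_fin, ← pow_mul, Nat.mul_comm]
  have hdenP : c0 * F ^ p ≤ ‖den‖ * P := by
    have hck : ∀ k, (∏ j, c j k) * ((n k).factorial : ℝ) ^ (p-1) ≤
        (∏ j, ‖(ascPochhammer ℂ (n k)).eval (b j k)‖) * ((n k : ℝ) + 1) ^ (K0 * (p-1)) := by
      intro k
      have h1 : ∏ j : Fin (p-1), (c j k * ((n k).factorial : ℝ)) ≤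
          ∏ j : Fin (p-1), (‖(ascPochhammer ℂ (n k)).eval (b j k)‖ * ((n k : ℝ) + 1) ^ K0) :=
        Finset.prod_le_prod (fun j _ => mul_nonneg (hc j k).le (Nat.cast_nonneg _))
          (fun j _ => hK' j k (n k))
      calc (∏ j, c j k) * ((n k).factorial : ℝ) ^ (p-1)
          = ∏ j : Fin (p-1), (c j k * ((n k).factorial : ℝ)) := by
            rw [Finset.prod_mul_distrib, Finset.prod_const, Finset.card_univ, Fintype.card_fin]
        _ ≤ ∏ j : Fin (p-1), (‖(ascPochhammer ℂ (n k)).eval (b j k)‖ * ((n k : ℝ) + 1) ^ K0) := h1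
        _ = (∏ j, ‖(ascPochhammer ℂ (n k)).eval (b j k)‖) * ((n k : ℝ) + 1) ^ (K0 * (p-1)) := by
            rw [Finset.prod_mul_distrib, Finset.prod_const, Finset.card_univ, Fintype.card_fin,
              ← pow_mul]
    have hdnorm : ‖den‖ = ∏ k, ((∏ j, ‖(ascPochhammer ℂ (n k)).eval (b j k)‖) *
        ((n k).factorial : ℝ)) := by
      rw [hdendef, norm_prod]
      apply Finset.prod_congr rfl
      intro k _
      rw [norm_mul, norm_prod]
      congr 1
      simp
    have hFp : c0 * F ^ p = ∏ k, ((∏ j, c j k) * ((n k).factorial : ℝ) ^ (p-1) *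
        ((n k).factorial : ℝ)) := by
      rw [hc0def, hFdef, Finset.prod_comm, ← Finset.prod_pow, ← Finset.prod_mul_distrib]
      apply Finset.prod_congr rfl
      intro k _
      have hpp : p - 1 + 1 = p := by omega
      rw [mul_assoc, ← pow_succ, hpp]
    rw [hFp, hdnorm, hPdef, ← Finset.prod_mul_distrib]
    apply Finset.prod_le_prod
    · intro k _
      exact mul_nonneg (mul_nonneg (Finset.prod_nonneg fun j _ => (hc j k).le)
        (pow_nonneg (Nat.cast_nonneg _) _)) (Nat.cast_nonneg _)
    · intro k _
      calc (∏ j, c j k) * ((n k).factorial : ℝ) ^ (p-1) * ((n k).factorial : ℝ)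
          ≤ ((∏ j, ‖(ascPochhammer ℂ (n k)).eval (b j k)‖) * ((n k : ℝ) + 1) ^ (K0 * (p-1))) *
            ((n k).factorial : ℝ) := by
            apply mul_le_mul_of_nonneg_right (hck k) (by positivity)
        _ = (∏ j, ‖(ascPochhammer ℂ (n k)).eval (b j k)‖) * ((n k).factorial : ℝ) *
            ((n k : ℝ) + 1) ^ (K0 * (p-1)) := by ring
  -- final chain
  have hnn1 : (0:ℝ) ≤ ∏ k, t k ^ n k := Finset.prod_nonneg fun k _ => pow_nonneg (ht0 k) _
  have h0F : (0:ℝ) ≤ F := hF0.le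
  have h0NM : (0:ℝ) ≤ NM := le_trans zero_le_one hNM1
  have h0q : (0:ℝ) ≤ q := hq0.le
  have h0P : (0:ℝ) ≤ P := Finset.prod_nonneg fun k _ => pow_nonneg (by positivity) _
  have hcc : c0 * c0⁻¹ = 1 := mul_inv_cancel₀ hc0.ne'
  calc ‖num‖ * ∏ k, ‖x k‖ ^ n k
      ≤ ((N.factorial : ℝ) * NM ^ M) ^ p * (∏ k, t k ^ n k) ^ p := by
        rw [hxprod]
        exact mul_le_mul_of_nonneg_right hnum (pow_nonneg hnn1 p)
    _ = ((N.factorial : ℝ) * ∏ k, t k ^ n k) ^ p * (NM ^ M) ^ p := by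
        rw [← mul_pow, ← mul_pow, mul_right_comm]
    _ ≤ (s ^ N * F) ^ p * (NM ^ M) ^ p :=
        mul_le_mul_of_nonneg_right
          (pow_le_pow_left₀ (mul_nonneg (Nat.cast_nonneg _) hnn1) hmult p)
          (pow_nonneg (pow_nonneg h0NM M) p)
    _ ≤ (r ^ N * F) ^ p * (NM ^ M) ^ p :=
        mul_le_mul_of_nonneg_right
          (pow_le_pow_left₀ (mul_nonneg (pow_nonneg hs0 N) h0F)
            (mul_le_mul_of_nonneg_right (pow_le_pow_left₀ hs0 hsr N) h0F) p)
          (pow_nonneg (pow_nonneg h0NM M) p)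
    _ = NM ^ (p * M) * q ^ N * (c0 * F ^ p) * c0⁻¹ := by
        rw [hqdef, Nat.mul_comm p M]
        linear_combination (-(NM ^ (M * p) * (r^p) ^ N * F ^ p)) * hcc
    _ ≤ NM ^ (p * M) * q ^ N * (‖den‖ * P) * c0⁻¹ :=
        mul_le_mul_of_nonneg_right
          (mul_le_mul_of_nonneg_left hdenP
            (mul_nonneg (pow_nonneg h0NM _) (pow_nonneg h0q N)))
          (inv_nonneg.2 hc0.le)
    _ ≤ NM ^ (p * M) * q ^ N * (‖den‖ * NM ^ (m * (K0 * (p-1)))) * c0⁻¹ :=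
        mul_le_mul_of_nonneg_right
          (mul_le_mul_of_nonneg_left
            (mul_le_mul_of_nonneg_left hP1 hden_pos.le)
            (mul_nonneg (pow_nonneg h0NM _) (pow_nonneg h0q N)))
          (inv_nonneg.2 hc0.le)
    _ = c0⁻¹ * (NM ^ E * q ^ N) * ‖den‖ := by
        rw [hEdef, pow_add]
        ring
end

section
/- Let p ≥ 2 and m ≥ 1 be integers, let a_1,…,a_p ∈ ℂ with no a_i a nonpositive integer, and let b_{j,k} ∈ ℂ for 1 ≤ j ≤ p−1, 1 ≤ k ≤ m with no b_{j,k} a nonpositive integer. For n ∈ ℕ^m set A_n = (∏_{i=1}^p (a_i)_{n_1+⋯+n_m}) / (∏_{k=1}^m (b_{1,k})_{n_k}⋯(b_{p−1,k})_{n_k}·n_k!). Then for every x ∈ ℂ^m with |x_1|^{1/p} + ⋯ + |x_m|^{1/p} > 1, the set {|A_n·x_1^{n_1}⋯x_m^{n_m}| : n ∈ ℕ^m} is unbounded; in particular the family (A_n x^n) is not summable. -/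
open scoped BigOperators
open scoped Nat

noncomputable def Complex.abs : AbsoluteValue ℂ ℝ := IsAbsoluteValue.toAbsoluteValue (norm : ℂ → ℝ)

lemma Complex.norm_eq_abs (z : ℂ) : ‖z‖ = Complex.abs z := rfl

lemma Complex.abs_natCast (n : ℕ) : Complex.abs (n : ℂ) = n := by
  rw [← Complex.norm_eq_abs]; simp

lemma FC_bern (u : ℝ) (hu : 0 < u) (K : ℕ) :
    u ^ K * (u + K) ≤ (u + 1) ^ K * u := by
  have hm2 : (-2:ℝ) ≤ 1/u := by have := one_div_pos.mpr hu; linarith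
  have h := one_add_mul_le_pow hm2 K
  have h2 : (1 + 1/u) ^ K * u ^ K = (u+1)^K := by
    rw [← mul_pow]; congr 1; field_simp
  have h3 : (1 + (K:ℝ) * (1/u)) * (u ^ K * u) = u ^ K * (u + K) := by
    field_simp
  have h4 : (1 + (K:ℝ) * (1/u)) * (u ^ K * u) ≤ (1 + 1/u)^K * (u ^ K * u) := by
    apply mul_le_mul_of_nonneg_right h (by positivity)
  calc u ^ K * (u + K) = (1 + (K:ℝ) * (1/u)) * (u ^ K * u) := h3.symm
    _ ≤ (1 + 1/u)^K * (u ^ K * u) := h4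
    _ = (u+1)^K * u := by rw [← mul_assoc, h2]

lemma FC_poch_pos (a : ℂ) (ha : ∀ n : ℕ, a ≠ -(n : ℂ)) (N : ℕ) :
    0 < Complex.abs ((ascPochhammer ℂ N).eval a) := by
  induction N with
  | zero => simp
  | succ N ih =>
    rw [ascPochhammer_succ_eval, map_mul]
    refine mul_pos ih ?_
    have : a + (N:ℂ) ≠ 0 := fun h => ha N (by linear_combination h)
    simpa using this

lemma FC_poch_upper (b : ℂ) (K : ℕ) (hK : Complex.abs b ≤ K) (n : ℕ) :
    Complex.abs ((ascPochhammer ℂ n).eval b) ≤ (n ! : ℝ) * ((n:ℝ)+1)^K := by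
  induction n with
  | zero => simp
  | succ n ih =>
    rw [ascPochhammer_succ_eval, map_mul, Nat.factorial_succ]
    push_cast
    set u : ℝ := (n:ℝ)+1 with hu
    have hb : Complex.abs (b + (n:ℂ)) ≤ u + K := by
      calc Complex.abs (b + n) ≤ Complex.abs b + Complex.abs (n:ℂ) := Complex.abs.add_le _ _
        _ ≤ u + K := by rw [Complex.abs_natCast, hu]; linarith
    have key := FC_bern u (by rw [hu]; positivity) K
    calc Complex.abs ((ascPochhammer ℂ n).eval b) * Complex.abs (b + (n:ℂ))
        ≤ ((n ! : ℝ) * u^K) * (u + K) :=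
          mul_le_mul (by rw [hu]; exact ih) hb (Complex.abs.nonneg _)
            (by rw [hu]; positivity)
      _ = (n ! : ℝ) * (u^K * (u + K)) := by ring
      _ ≤ (n ! : ℝ) * ((u+1)^K * u) := by
          apply mul_le_mul_of_nonneg_left key (by positivity)
      _ = ((n:ℝ)+1) * (n ! : ℝ) * ((n:ℝ)+1+1)^K := by rw [hu]; ring

lemma FC_poch_lower (a : ℂ) (ha : ∀ n : ℕ, a ≠ -(n : ℂ)) (K : ℕ)
    (hK : Complex.abs a + 1 ≤ K) :
    ∃ c : ℝ, 0 < c ∧ ∀ N : ℕ, 2*K ≤ N →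
      c * (N ! : ℝ) ≤ Complex.abs ((ascPochhammer ℂ N).eval a) * ((N:ℝ)+1)^(2*K) := by
  set B := 2*K with hB
  have hfac : (0:ℝ) < (B ! : ℝ) := by exact_mod_cast Nat.factorial_pos B
  refine ⟨Complex.abs ((ascPochhammer ℂ B).eval a) * ((B:ℝ)+1)^B / (B ! : ℝ), ?_, ?_⟩
  · have h1 := FC_poch_pos a ha B
    positivity
  · intro N hN
    induction N, hN using Nat.le_induction with
    | base => rw [div_mul_cancel₀ _ hfac.ne']
    | succ N hN ih =>
      rw [ascPochhammer_succ_eval, map_mul, Nat.factorial_succ]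
      push_cast
      set c := Complex.abs ((ascPochhammer ℂ B).eval a) * ((B:ℝ)+1)^B / (B ! : ℝ) with hc
      set u : ℝ := (N:ℝ)+1 with hu
      set v : ℝ := Complex.abs (a + (N:ℂ)) with hv
      set P : ℝ := Complex.abs ((ascPochhammer ℂ N).eval a) with hP
      have hPpos : 0 < P := FC_poch_pos a ha N
      have hvnn : (0:ℝ) ≤ v := Complex.abs.nonneg _
      have hu2K : 2*(K:ℝ) ≤ (N:ℝ) := by exact_mod_cast hN
      have hKnn : (0:ℝ) ≤ (K:ℝ) := Nat.cast_nonneg K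
      have habs : u - K ≤ v := by
        have h1 : Complex.abs ((N:ℂ)) ≤ Complex.abs (a + (N:ℂ)) + Complex.abs a := by
          calc Complex.abs ((N:ℂ)) = Complex.abs ((a + (N:ℂ)) + (-a)) := by norm_num
            _ ≤ Complex.abs (a + (N:ℂ)) + Complex.abs (-a) := Complex.abs.add_le _ _
            _ = Complex.abs (a + (N:ℂ)) + Complex.abs a := by rw [Complex.abs.map_neg]
        rw [Complex.abs_natCast] at h1
        rw [hu, hv]; linarith
      have key := FC_bern u (by rw [hu]; positivity) B
      have hBcast : ((B:ℕ):ℝ) = 2*(K:ℝ) := by rw [hB]; push_cast; ring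
      have h2 : u * u^B ≤ v * (u+1)^B := by
        have hupos : (0:ℝ) < u := by rw [hu]; positivity
        have hupow : (0:ℝ) ≤ u^B := by positivity
        have q1 : u*u ≤ (u - K)*(u + 2*K) := by nlinarith
        have c1 : (u*u) * u^B ≤ ((u - K)*(u + 2*K)) * u^B :=
          mul_le_mul_of_nonneg_right q1 hupow
        have c2 : ((u - K)*(u + 2*K)) * u^B ≤ (v*(u + 2*K)) * u^B := by
          apply mul_le_mul_of_nonneg_right _ hupow
          apply mul_le_mul_of_nonneg_right habs (by nlinarith)
        have c3 : (v*(u + 2*K)) * u^B = v * (u^B * (u + B)) := by rw [hBcast]; ring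
        have c4 : v * (u^B * (u + B)) ≤ v * ((u+1)^B * u) :=
          mul_le_mul_of_nonneg_left key hvnn
        have : (u * u^B) * u ≤ (v * (u+1)^B) * u := by nlinarith
        exact le_of_mul_le_mul_right this hupos
      calc c * ((u) * (N ! : ℝ)) = (c * (N ! : ℝ)) * u := by ring
        _ ≤ (P * u^B) * u := by
            apply mul_le_mul_of_nonneg_right _ (by rw [hu]; positivity)
            simpa [hu] using ih
        _ = P * (u * u^B) := by ring
        _ ≤ P * (v * (u+1)^B) := mul_le_mul_of_nonneg_left h2 hPpos.le
        _ = P * v * (u+1)^B := by ring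

lemma FC_select (m : ℕ) (hm : 1 ≤ m) (y : Fin m → ℝ) (hy : ∀ k, 0 ≤ y k) (N : ℕ) :
    ∃ n : Fin m → ℕ, (∑ k, n k = N) ∧
      (∑ k, y k) ^ N ≤ ((N:ℝ)+1)^m *
        ((Nat.multinomial Finset.univ n : ℝ) * ∏ k, y k ^ n k) := by
  classical
  set s := Finset.piAntidiag (Finset.univ : Finset (Fin m)) N with hs
  set g : (Fin m → ℕ) → ℝ :=
    fun f => (Nat.multinomial Finset.univ f : ℝ) * ∏ k, y k ^ f k with hg
  have hgnn : ∀ f, 0 ≤ g f := fun f => by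
    apply mul_nonneg (Nat.cast_nonneg _)
    exact Finset.prod_nonneg fun k _ => pow_nonneg (hy k) _
  have htot : (∑ k, y k) ^ N = ∑ f ∈ s, g f :=
    Finset.sum_pow_eq_sum_piAntidiag Finset.univ y N
  have hne : s.Nonempty := by
    refine ⟨fun k => if k = ⟨0, hm⟩ then N else 0, ?_⟩
    rw [hs, Finset.mem_piAntidiag]
    constructor
    · simp
    · intro i _; exact Finset.mem_univ i
  have hcardnat : s.card ≤ (N+1)^m := by
    have hsub : s ⊆ Fintype.piFinset (fun _ : Fin m => Finset.range (N+1)) := by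
      intro f hf
      rw [hs, Finset.mem_piAntidiag] at hf
      rw [Fintype.mem_piFinset]
      intro k
      rw [Finset.mem_range, Nat.lt_succ_iff, ← hf.1]
      exact Finset.single_le_sum (fun i _ => Nat.zero_le _) (Finset.mem_univ k)
    calc s.card ≤ _ := Finset.card_le_card hsub
      _ = (N+1)^m := by
        rw [Fintype.card_piFinset]
        simp [Finset.card_range]
  have hcard : (s.card : ℝ) ≤ ((N:ℝ)+1)^m := by
    calc (s.card : ℝ) ≤ (((N+1)^m : ℕ) : ℝ) := by exact_mod_cast hcardnat
      _ = ((N:ℝ)+1)^m := by push_cast; ring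
  have hcardpos : (0:ℝ) < s.card := by
    exact_mod_cast Finset.card_pos.mpr hne
  set T : ℝ := (∑ k, y k) ^ N with hT
  have hTnn : 0 ≤ T := htot ▸ Finset.sum_nonneg fun f _ => hgnn f
  have havg : ∑ _f ∈ s, T / s.card ≤ ∑ f ∈ s, g f := by
    rw [Finset.sum_const, nsmul_eq_mul, mul_div_cancel₀ _ hcardpos.ne', ← htot]
  obtain ⟨n, hns, hle⟩ := Finset.exists_le_of_sum_le hne havg
  rw [hs, Finset.mem_piAntidiag] at hns
  refine ⟨n, hns.1, ?_⟩
  rw [div_le_iff₀ hcardpos] at hle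
  calc T ≤ g n * s.card := hle
    _ ≤ g n * ((N:ℝ)+1)^m := mul_le_mul_of_nonneg_left hcard (hgnn n)
    _ = ((N:ℝ)+1)^m * g n := by ring

set_option maxHeartbeats 2000000 in
/-- divergence of the hypergeometric series `F_C^{p,m}(a,B;x)` outside the
closure of the convergence domain: if `|x_1|^{1/p} + ⋯ + |x_m|^{1/p} > 1` then the terms
are unbounded and the family is not summable. -/
theorem FCpm_diverges (p m : ℕ) (hp : 2 ≤ p) (hm : 1 ≤ m)
    (a : Fin p → ℂ) (ha : ∀ i, ∀ n : ℕ, a i ≠ -(n : ℂ))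
    (b : Fin (p - 1) → Fin m → ℂ)
    (hb : ∀ j k, ∀ n : ℕ, b j k ≠ -(n : ℂ))
    (A : (Fin m → ℕ) → ℂ)
    (hA : ∀ n : Fin m → ℕ,
      A n = (∏ i, (ascPochhammer ℂ (∑ k, n k)).eval (a i)) /
        (∏ k, ((∏ j, (ascPochhammer ℂ (n k)).eval (b j k)) * (Nat.factorial (n k) : ℂ))))
    (x : Fin m → ℂ)
    (hx : 1 < ∑ k, ‖x k‖ ^ ((p : ℝ)⁻¹)) :
    ¬ BddAbove (Set.range fun n : Fin m → ℕ => ‖A n * ∏ k, x k ^ n k‖) ∧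
      ¬ Summable (fun n : Fin m → ℕ => A n * ∏ k, x k ^ n k) := by
  have hp0 : p ≠ 0 := by omega
  set Ka : ℕ := ∑ i, ⌈Complex.abs (a i)⌉₊ with hKa
  set Kb : ℕ := ∑ j, ∑ k, ⌈Complex.abs (b j k)⌉₊ with hKb
  set K : ℕ := 1 + Ka + Kb with hKdef
  have hKa' : ∀ i, Complex.abs (a i) + 1 ≤ (K:ℝ) := by
    intro i
    have h1 : ⌈Complex.abs (a i)⌉₊ + 1 ≤ K := by
      have t := Finset.single_le_sum (f := fun i => ⌈Complex.abs (a i)⌉₊)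
        (fun _ _ => Nat.zero_le _) (Finset.mem_univ i)
      have t' : ⌈Complex.abs (a i)⌉₊ ≤ Ka := t
      omega
    have h2 : Complex.abs (a i) ≤ (⌈Complex.abs (a i)⌉₊ : ℝ) := Nat.le_ceil _
    have h3 : ((⌈Complex.abs (a i)⌉₊ : ℕ) : ℝ) + 1 ≤ (K:ℝ) := by exact_mod_cast h1
    linarith
  have hKb' : ∀ j k, Complex.abs (b j k) ≤ (K:ℝ) := by
    intro j k
    have h1 : ⌈Complex.abs (b j k)⌉₊ ≤ K := by
      have t1 := Finset.single_le_sum (f := fun k' => ⌈Complex.abs (b j k')⌉₊)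
        (fun _ _ => Nat.zero_le _) (Finset.mem_univ k)
      have t1' : ⌈Complex.abs (b j k)⌉₊ ≤ ∑ k', ⌈Complex.abs (b j k')⌉₊ := t1
      have t2 := Finset.single_le_sum (f := fun j' => ∑ k', ⌈Complex.abs (b j' k')⌉₊)
        (fun _ _ => Nat.zero_le _) (Finset.mem_univ j)
      have t2' : (∑ k', ⌈Complex.abs (b j k')⌉₊) ≤ Kb := t2
      omega
    have h2 : Complex.abs (b j k) ≤ (⌈Complex.abs (b j k)⌉₊ : ℝ) := Nat.le_ceil _
    have h3 : ((⌈Complex.abs (b j k)⌉₊ : ℕ) : ℝ) ≤ (K:ℝ) := by exact_mod_cast h1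
    linarith
  choose c hc0 hcle using fun i => FC_poch_lower (a i) (ha i) K (hKa' i)
  set C : ℝ := ∏ i, c i with hC
  have hCpos : 0 < C := Finset.prod_pos fun i _ => hc0 i
  set y : Fin m → ℝ := fun k => Complex.abs (x k) ^ ((p:ℝ)⁻¹) with hy
  have hy0 : ∀ k, 0 ≤ y k := fun k => Real.rpow_nonneg (Complex.abs.nonneg _) _
  have hyp : ∀ k, y k ^ p = Complex.abs (x k) := fun k =>
    Real.rpow_inv_natCast_pow (Complex.abs.nonneg _) hp0
  set S : ℝ := ∑ k, y k with hS
  have hS1 : 1 < S := hx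
  have hS0 : (0:ℝ) ≤ S := by linarith
  set r : ℝ := S ^ p with hr
  have hr1 : 1 < r := one_lt_pow₀ hS1 hp0
  have hr0 : (0:ℝ) < r := by linarith
  set E : ℕ := 2*K*p + K*(p-1)*m + m*p with hE
  have key : ¬ BddAbove (Set.range fun n : Fin m → ℕ => ‖A n * ∏ k, x k ^ n k‖) := by
    rintro ⟨M, hM⟩
    rw [mem_upperBounds] at hM
    have htend : Filter.Tendsto (fun N : ℕ => M * (((N:ℝ)+1)^E / r^N))
        Filter.atTop (nhds 0) := by
      have h1 := tendsto_pow_const_div_const_pow_of_one_lt E hr1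
      have h2 := h1.comp (Filter.tendsto_add_atTop_nat 1)
      have h3 := Filter.Tendsto.const_mul (M * r) h2
      rw [mul_zero] at h3
      apply h3.congr
      intro N
      have hrN : r ^ N ≠ 0 := (pow_pos hr0 N).ne'
      have hr0' : r ≠ 0 := hr0.ne'
      show (M * r) * (((N+1:ℕ):ℝ)^E / r^(N+1)) = M * (((N:ℝ)+1)^E / r^N)
      push_cast
      rw [pow_succ]
      field_simp
    have hev := (htend.eventually_lt_const hCpos).and (Filter.eventually_ge_atTop (2*K))
    obtain ⟨N, hNC, hN2K⟩ := hev.exists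
    have hMr : M * ((N:ℝ)+1)^E < C * r^N := by
      rw [← mul_div_assoc] at hNC
      exact (div_lt_iff₀ (pow_pos hr0 N)).mp hNC
    obtain ⟨n, hnsum, hnsel⟩ := FC_select m hm y hy0 N
    set Q : ℝ := (N:ℝ)+1 with hQ
    have hQpos : (0:ℝ) < Q := by rw [hQ]; positivity
    set NumR : ℝ := ∏ i, Complex.abs ((ascPochhammer ℂ N).eval (a i)) with hNum
    set DenR : ℝ := ∏ k, ((∏ j, Complex.abs ((ascPochhammer ℂ (n k)).eval (b j k)))
      * ((n k)! : ℝ)) with hDen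
    have hDpos : 0 < DenR := Finset.prod_pos fun k _ => mul_pos
      (Finset.prod_pos fun j _ => FC_poch_pos _ (hb j k) _)
      (by exact_mod_cast Nat.factorial_pos (n k))
    have habsA : Complex.abs (A n) = NumR / DenR := by
      rw [hA n, hnsum, map_div₀, map_prod, map_prod]
      congr 1
      apply Finset.prod_congr rfl
      intro k _
      rw [map_mul, map_prod, Complex.abs_natCast]
    set Py : ℝ := ∏ k, y k ^ n k with hPy
    have hPynn : (0:ℝ) ≤ Py :=
      Finset.prod_nonneg fun k _ => pow_nonneg (hy0 k) _
    have hterm : ‖A n * ∏ k, x k ^ n k‖ = (NumR / DenR) * Py^p := by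
      rw [norm_mul, norm_prod, Complex.norm_eq_abs, habsA]
      congr 1
      rw [hPy, ← Finset.prod_pow]
      apply Finset.prod_congr rfl
      intro k _
      rw [norm_pow, Complex.norm_eq_abs, ← hyp k, ← pow_mul, mul_comm p (n k), pow_mul]
    set F : ℝ := ∏ k, ((n k)! : ℝ) with hF
    have hFpos : (0:ℝ) < F :=
      Finset.prod_pos fun k _ => by exact_mod_cast Nat.factorial_pos (n k)
    set mult : ℝ := (Nat.multinomial Finset.univ n : ℝ) with hmult
    have hfacts : mult * F = (N ! : ℝ) := by
      have h := Nat.multinomial_spec Finset.univ n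
      rw [hnsum] at h
      rw [hmult, hF, mul_comm]
      exact_mod_cast congrArg (Nat.cast : ℕ → ℝ) h
    have hnum : C * ((N ! : ℝ))^p ≤ NumR * Q^(2*K*p) := by
      have h2 := Finset.prod_le_prod (s := Finset.univ)
        (f := fun i => c i * (N ! : ℝ))
        (g := fun i => Complex.abs ((ascPochhammer ℂ N).eval (a i)) * Q^(2*K))
        (fun i _ => mul_nonneg (hc0 i).le (Nat.cast_nonneg _))
        (fun i _ => hcle i N hN2K)
      calc C * ((N ! : ℝ))^p = ∏ i, (c i * (N ! : ℝ)) := by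
            rw [Finset.prod_mul_distrib, Finset.prod_const, hC,
              Finset.card_univ, Fintype.card_fin]
        _ ≤ ∏ i, (Complex.abs ((ascPochhammer ℂ N).eval (a i)) * Q^(2*K)) := h2
        _ = NumR * Q^(2*K*p) := by
            rw [Finset.prod_mul_distrib, Finset.prod_const, Finset.card_univ,
              Fintype.card_fin, ← pow_mul, hNum]
    have hden : DenR ≤ F^p * Q^(K*(p-1)*m) := by
      have hstep : ∀ k ∈ Finset.univ,
          (∏ j, Complex.abs ((ascPochhammer ℂ (n k)).eval (b j k))) * ((n k)! : ℝ)
            ≤ ((n k)! : ℝ)^p * Q^(K*(p-1)) := by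
        intro k _
        have hnkN : n k ≤ N := by
          rw [← hnsum]
          exact Finset.single_le_sum (fun i _ => Nat.zero_le _) (Finset.mem_univ k)
        have hnk1 : ((n k : ℝ)+1) ≤ Q := by
          rw [hQ]; exact_mod_cast Nat.succ_le_succ hnkN
        have h2 := Finset.prod_le_prod (s := Finset.univ)
          (f := fun j => Complex.abs ((ascPochhammer ℂ (n k)).eval (b j k)))
          (g := fun _ => ((n k)! : ℝ) * ((n k : ℝ)+1)^K)
          (fun j _ => Complex.abs.nonneg _)
          (fun j _ => FC_poch_upper (b j k) K (hKb' j k) (n k))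
        rw [Finset.prod_const, Finset.card_univ, Fintype.card_fin] at h2
        have hfc : (0:ℝ) ≤ ((n k)! : ℝ) := Nat.cast_nonneg _
        calc (∏ j, Complex.abs ((ascPochhammer ℂ (n k)).eval (b j k))) * ((n k)! : ℝ)
            ≤ (((n k)! : ℝ) * ((n k : ℝ)+1)^K)^(p-1) * ((n k)! : ℝ) :=
              mul_le_mul_of_nonneg_right h2 hfc
          _ = ((n k)! : ℝ)^(p-1) * ((n k)! : ℝ) * (((n k : ℝ)+1)^(K*(p-1))) := by
              rw [mul_pow, ← pow_mul]; ring
          _ ≤ ((n k)! : ℝ)^(p-1) * ((n k)! : ℝ) * Q^(K*(p-1)) := by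
              apply mul_le_mul_of_nonneg_left
                (pow_le_pow_left₀ (by positivity) hnk1 _) (by positivity)
          _ = ((n k)! : ℝ)^p * Q^(K*(p-1)) := by
              rw [← pow_succ, Nat.sub_add_cancel (by omega : 1 ≤ p)]
      calc DenR ≤ ∏ k, (((n k)! : ℝ)^p * Q^(K*(p-1))) := by
            rw [hDen]
            exact Finset.prod_le_prod (fun k _ => mul_nonneg
              (Finset.prod_nonneg fun j _ => Complex.abs.nonneg _) (Nat.cast_nonneg _)) hstep
        _ = F^p * Q^(K*(p-1)*m) := by
            rw [Finset.prod_mul_distrib, Finset.prod_pow, Finset.prod_const,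
              Finset.card_univ, Fintype.card_fin, ← pow_mul, hF]
    have hrS : r ^ N = (S^N)^p := by rw [hr, ← pow_mul, ← pow_mul, mul_comm]
    have hselp : (S^N)^p ≤ (Q^m * (mult * Py))^p := by
      apply pow_le_pow_left₀ (pow_nonneg hS0 N)
      rw [hS, hQ, hmult, hPy]
      exact hnsel
    have hchain : C * r^N * DenR ≤ (NumR * Py^p) * Q^E := by
      calc C * r^N * DenR ≤ C * r^N * (F^p * Q^(K*(p-1)*m)) := by
            apply mul_le_mul_of_nonneg_left hden (by positivity)
        _ = C * ((S^N)^p * F^p) * Q^(K*(p-1)*m) := by rw [hrS]; ring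
        _ ≤ C * ((Q^m*(mult*Py))^p * F^p) * Q^(K*(p-1)*m) := by
            apply mul_le_mul_of_nonneg_right _ (by positivity)
            apply mul_le_mul_of_nonneg_left
              (mul_le_mul_of_nonneg_right hselp (by positivity)) hCpos.le
        _ = (C * ((N ! : ℝ))^p) * Py^p * (Q^(m*p) * Q^(K*(p-1)*m)) := by
            rw [← hfacts, mul_pow, mul_pow, mul_pow, ← pow_mul]
            ring
        _ ≤ (NumR * Q^(2*K*p)) * Py^p * (Q^(m*p) * Q^(K*(p-1)*m)) := by
            apply mul_le_mul_of_nonneg_right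
              (mul_le_mul_of_nonneg_right hnum (by positivity)) (by positivity)
        _ = (NumR * Py^p) * Q^E := by
            rw [hE, pow_add, pow_add]; ring
    have htermden : ‖A n * ∏ k, x k ^ n k‖ * DenR = NumR * Py^p := by
      rw [hterm]
      field_simp
    have hfinal : C * r^N ≤ ‖A n * ∏ k, x k ^ n k‖ * Q^E := by
      refine le_of_mul_le_mul_right ?_ hDpos
      calc C * r^N * DenR ≤ (NumR * Py^p) * Q^E := hchain
        _ = (‖A n * ∏ k, x k ^ n k‖ * DenR) * Q^E := by rw [htermden]
        _ = ‖A n * ∏ k, x k ^ n k‖ * Q^E * DenR := by ring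
    have hlt : M < ‖A n * ∏ k, x k ^ n k‖ := by
      have h := lt_of_lt_of_le hMr hfinal
      exact lt_of_mul_lt_mul_right h (by positivity)
    exact absurd (hM _ ⟨n, rfl⟩) (not_le.mpr hlt)
  refine ⟨key, fun hsum => key ?_⟩
  have h1 : Summable fun n : Fin m → ℕ => ‖A n * ∏ k, x k ^ n k‖ :=
    summable_norm_iff.mpr hsum
  exact ⟨∑' n : Fin m → ℕ, ‖A n * ∏ k, x k ^ n k‖, by
    rintro z ⟨n, rfl⟩
    exact Summable.le_tsum h1 n fun j _ => norm_nonneg _⟩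
end

section
/- Let p ≥ 2 and m ≥ 1 be integers and let ζ = exp(2π√−1/p) ∈ ℂ be the primitive p-th root of unity. Consider the polynomial R̃(z_1,…,z_m) = ∏_{(i_1,…,i_m) ∈ {0,…,p−1}^m} (1 − ζ^{i_1}z_1 − ⋯ − ζ^{i_m}z_m) in ℂ[z_1,…,z_m]. Then there exists a polynomial P ∈ ℂ[x_1,…,x_m] such that P(z_1^p,…,z_m^p) = R̃(z_1,…,z_m) as polynomials, P has total degree p^{m−1}, and P is irreducible in ℂ[x_1,…,x_m]. -/
open scoped BigOperators

set_option linter.unusedSectionVars false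

open MvPolynomial

namespace FCaux

variable {σ : Type*} {R : Type*} [CommRing R] [IsDomain R]

/-- homogenization map -/
noncomputable def Φ : MvPolynomial σ R →ₐ[R] Polynomial (MvPolynomial σ R) :=
  aeval (fun k => Polynomial.C (X k) * Polynomial.X)

lemma degree_eq_sum (d : σ →₀ ℕ) : d.degree = d.sum fun _ e => e := rfl

lemma Φ_monomial (d : σ →₀ ℕ) (c : R) :
    Φ (monomial d c) = Polynomial.C (monomial d c) * Polynomial.X ^ d.degree := by
  rw [Φ, aeval_monomial, monomial_eq]
  have : (d.prod fun i k => (Polynomial.C (X i : MvPolynomial σ R) * Polynomial.X) ^ k)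
      = Polynomial.C (d.prod fun i k => (X i : MvPolynomial σ R) ^ k) *
          Polynomial.X ^ d.degree := by
    rw [Finsupp.prod, Finsupp.prod, degree_eq_sum, Finsupp.sum, map_prod,
      ← Finset.prod_pow_eq_pow_sum, ← Finset.prod_mul_distrib]
    exact Finset.prod_congr rfl fun i _ => by rw [mul_pow, map_pow]
  rw [this]
  rw [Polynomial.algebraMap_apply, algebraMap_eq, map_mul]
  ring

lemma coeff_Φ (f : MvPolynomial σ R) (n : ℕ) :
    (Φ f).coeff n = homogeneousComponent n f := by
  classical
  conv_lhs => rw [as_sum f]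
  rw [map_sum, Polynomial.finset_sum_coeff]
  conv_rhs => rw [as_sum f, map_sum]
  refine Finset.sum_congr rfl fun d _ => ?_
  rw [Φ_monomial, Polynomial.coeff_C_mul, Polynomial.coeff_X_pow, mul_ite, mul_one, mul_zero]
  ext e
  rw [coeff_homogeneousComponent]
  by_cases hde : d = e
  · subst hde
    by_cases h : n = d.degree
    · simp [h]
    · rw [if_neg h, if_neg (fun hh => h hh.symm), MvPolynomial.coeff_zero]
  · rw [coeff_monomial, if_neg hde, ite_self]
    split_ifs <;> simp [coeff_monomial, hde]

lemma homogeneousComponent_totalDegree_ne_zero {f : MvPolynomial σ R} (hf : f ≠ 0) :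
    homogeneousComponent f.totalDegree f ≠ 0 := by
  obtain ⟨d, hd, hsup⟩ := Finset.exists_mem_eq_sup f.support
    (support_nonempty.mpr hf) (fun s : σ →₀ ℕ => s.sum fun _ e => e)
  have hdeg : d.degree = f.totalDegree := by rw [totalDegree, hsup]; rfl
  intro h
  have h2 := coeff_homogeneousComponent (φ := f) f.totalDegree d
  rw [h, if_pos hdeg, MvPolynomial.coeff_zero] at h2
  exact (mem_support_iff.mp hd) h2.symm

lemma Φ_ne_zero {f : MvPolynomial σ R} (hf : f ≠ 0) : Φ f ≠ 0 := by
  intro h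
  apply homogeneousComponent_totalDegree_ne_zero hf
  rw [← coeff_Φ, h, Polynomial.coeff_zero]

lemma natDegree_Φ {f : MvPolynomial σ R} (hf : f ≠ 0) :
    (Φ f).natDegree = f.totalDegree := by
  refine le_antisymm (Polynomial.natDegree_le_iff_coeff_eq_zero.mpr fun N hN => ?_)
    (Polynomial.le_natDegree_of_ne_zero ?_)
  · rw [coeff_Φ, homogeneousComponent_eq_zero _ f hN]
  · rw [coeff_Φ]
    exact homogeneousComponent_totalDegree_ne_zero hf

lemma totalDegree_mul_eq {f g : MvPolynomial σ R} (hf : f ≠ 0) (hg : g ≠ 0) :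
    (f * g).totalDegree = f.totalDegree + g.totalDegree := by
  rw [← natDegree_Φ (mul_ne_zero hf hg), map_mul,
    Polynomial.natDegree_mul (Φ_ne_zero hf) (Φ_ne_zero hg), natDegree_Φ hf, natDegree_Φ hg]

lemma eq_C_of_totalDegree_zero {f : MvPolynomial σ R} (h : f.totalDegree = 0) :
    f = C (coeff 0 f) := by
  have := sum_homogeneousComponent f
  rw [h, Finset.sum_range_one, homogeneousComponent_zero] at this
  exact this.symm

lemma totalDegree_eq_zero_of_isUnit {f : MvPolynomial σ R} (h : IsUnit f) :
    f.totalDegree = 0 := by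
  obtain ⟨u, rfl⟩ := h
  have h1 : (u : MvPolynomial σ R) * ↑u⁻¹ = 1 := u.mul_inv
  have hu : (u : MvPolynomial σ R) ≠ 0 := u.ne_zero
  have hv : (↑u⁻¹ : MvPolynomial σ R) ≠ 0 := u⁻¹.ne_zero
  have := totalDegree_mul_eq hu hv
  rw [h1, totalDegree_one] at this
  omega

variable {K : Type*} [Field K]

lemma isUnit_of_C {c : K} (hc : c ≠ 0) : IsUnit (C c : MvPolynomial σ K) :=
  hc.isUnit.map (C : K →+* MvPolynomial σ K)

lemma isUnit_of_totalDegree_zero {f : MvPolynomial σ K} (hf : f ≠ 0)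
    (h : f.totalDegree = 0) : IsUnit f := by
  have hc : coeff 0 f ≠ 0 := fun h0 => hf (by rw [eq_C_of_totalDegree_zero h, h0, map_zero])
  rw [eq_C_of_totalDegree_zero h]
  exact isUnit_of_C hc

lemma irreducible_of_totalDegree_one {f : MvPolynomial σ K} (h : f.totalDegree = 1) :
    Irreducible f := by
  have hf : f ≠ 0 := fun h0 => by simp [h0] at h
  constructor
  · intro hu
    rw [totalDegree_eq_zero_of_isUnit hu] at h
    exact one_ne_zero h.symm
  · rintro a b rfl
    have ha : a ≠ 0 := left_ne_zero_of_mul hf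
    have hb : b ≠ 0 := right_ne_zero_of_mul hf
    rw [totalDegree_mul_eq ha hb] at h
    rcases Nat.add_eq_one_iff.mp h with ⟨h1, _⟩ | ⟨_, h1⟩
    · exact Or.inl (isUnit_of_totalDegree_zero ha h1)
    · exact Or.inr (isUnit_of_totalDegree_zero hb h1)

section scale
variable {m : ℕ}

/-- scaling the variables -/
noncomputable def scl (c : Fin m → K) : MvPolynomial (Fin m) K →ₐ[K] MvPolynomial (Fin m) K :=
  bind₁ fun k => C (c k) * X k

lemma scl_monomial (c : Fin m → K) (d : Fin m →₀ ℕ) (a : K) :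
    scl c (monomial d a) = monomial d (a * ∏ k, c k ^ d k) := by
  classical
  rw [scl, bind₁_monomial]
  have h1 : ∏ k, c k ^ d k = ∏ k ∈ d.support, c k ^ d k := by
    refine (Finset.prod_subset (Finset.subset_univ _) fun k _ hk => ?_).symm
    rw [Finsupp.notMem_support_iff.mp hk, pow_zero]
  rw [h1, monomial_eq, Finsupp.prod]
  rw [map_mul, map_prod]
  have h2 : ∀ k ∈ d.support, (C (c k) * X k) ^ d k
      = C (c k ^ d k) * (X k : MvPolynomial (Fin m) K) ^ d k := fun k _ => by
    rw [mul_pow, map_pow]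
  rw [Finset.prod_congr rfl h2, Finset.prod_mul_distrib]
  ring

lemma coeff_scl (c : Fin m → K) (f : MvPolynomial (Fin m) K) (d : Fin m →₀ ℕ) :
    coeff d (scl c f) = (∏ k, c k ^ d k) * coeff d f := by
  classical
  conv_lhs => rw [as_sum f, map_sum]
  rw [coeff_sum]
  have h1 : ∀ d' ∈ f.support, coeff d (scl c (monomial d' (coeff d' f)))
      = if d' = d then coeff d' f * ∏ k, c k ^ d' k else 0 := fun d' _ => by
    rw [scl_monomial, coeff_monomial]
  rw [Finset.sum_congr rfl h1, Finset.sum_ite_eq' f.support d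
    (fun d' => coeff d' f * ∏ k, c k ^ d' k)]
  by_cases hd : d ∈ f.support
  · rw [if_pos hd, mul_comm]
  · rw [if_neg hd, MvPolynomial.notMem_support_iff.mp hd, mul_zero]

end scale

section expandmap
variable {m p : ℕ}

/-- multiply exponents by p -/
noncomputable def emul (p : ℕ) (d : Fin m →₀ ℕ) : Fin m →₀ ℕ :=
  Finsupp.mapRange (fun e => p * e) (mul_zero p) d

lemma emul_apply (d : Fin m →₀ ℕ) (k : Fin m) : emul p d k = p * d k := rfl

lemma emul_inj (hp : p ≠ 0) {d d' : Fin m →₀ ℕ} (h : emul p d = emul p d') : d = d' := by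
  ext k
  have := congrArg (fun g : Fin m →₀ ℕ => g k) h
  simp only [emul_apply] at this
  exact Nat.eq_of_mul_eq_mul_left (Nat.pos_of_ne_zero hp) this

lemma emul_sum (d : Fin m →₀ ℕ) :
    ((emul p d).sum fun _ e => e) = p * d.sum fun _ e => e := by
  rw [emul, Finsupp.sum_mapRange_index fun _ => rfl, Finsupp.sum, Finsupp.sum, Finset.mul_sum]

/-- the expansion map -/
noncomputable def A (p : ℕ) : MvPolynomial (Fin m) K →ₐ[K] MvPolynomial (Fin m) K :=
  bind₁ fun k => X k ^ p

lemma A_monomial (d : Fin m →₀ ℕ) (a : K) :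
    A p (monomial d a) = monomial (emul p d) a := by
  classical
  rw [A, bind₁_monomial, monomial_eq, emul,
    Finsupp.prod_mapRange_index (fun n => pow_zero _), Finsupp.prod]
  refine congrArg _ (Finset.prod_congr rfl fun k _ => ?_)
  rw [← pow_mul]

lemma coeff_A (hp : p ≠ 0) (f : MvPolynomial (Fin m) K) (d : Fin m →₀ ℕ) :
    coeff (emul p d) (A p f) = coeff d f := by
  classical
  conv_lhs => rw [as_sum f, map_sum]
  rw [coeff_sum]
  have h1 : ∀ d' ∈ f.support, coeff (emul p d) (A p (monomial d' (coeff d' f)))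
      = if d' = d then coeff d' f else 0 := fun d' _ => by
    rw [A_monomial, coeff_monomial]
    by_cases h : d' = d
    · rw [if_pos (by rw [h]), if_pos h]
    · rw [if_neg (fun he => h (emul_inj hp he)), if_neg h]
  rw [Finset.sum_congr rfl h1, Finset.sum_ite_eq' f.support d (fun d' => coeff d' f)]
  by_cases hd : d ∈ f.support
  · rw [if_pos hd]
  · rw [if_neg hd, MvPolynomial.notMem_support_iff.mp hd]

lemma A_ne_zero (hp : p ≠ 0) {f : MvPolynomial (Fin m) K} (hf : f ≠ 0) : A p f ≠ 0 := by
  obtain ⟨d, hd⟩ := ne_zero_iff.mp hf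
  intro h
  apply hd
  rw [← coeff_A hp f d, h, MvPolynomial.coeff_zero]

lemma totalDegree_A (hp : p ≠ 0) (f : MvPolynomial (Fin m) K) :
    (A p f).totalDegree = p * f.totalDegree := by
  classical
  rcases eq_or_ne f 0 with rfl | hf
  · simp
  refine le_antisymm ?_ ?_
  · conv_lhs => rw [as_sum f, map_sum]
    refine le_trans (totalDegree_finset_sum _ _) (Finset.sup_le fun d hd => ?_)
    rw [A_monomial, totalDegree_monomial _ (mem_support_iff.mp hd), emul_sum]
    exact Nat.mul_le_mul_left p (le_totalDegree hd)
  · obtain ⟨d, hd, hsup⟩ := Finset.exists_mem_eq_sup f.support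
      (support_nonempty.mpr hf) (fun s : Fin m →₀ ℕ => s.sum fun _ e => e)
    have h1 : coeff (emul p d) (A p f) ≠ 0 := by
      rw [coeff_A hp]
      exact mem_support_iff.mp hd
    have h2 := le_totalDegree (mem_support_iff.mpr h1)
    rw [emul_sum] at h2
    calc p * f.totalDegree = p * (d.sum fun _ e => e) := by rw [totalDegree, hsup]
    _ ≤ _ := h2
end expandmap

lemma totalDegree_prod_eq {ι : Type*} (s : Finset ι) (f : ι → MvPolynomial σ R)
    (h : ∀ i ∈ s, f i ≠ 0) :
    (∏ i ∈ s, f i).totalDegree = ∑ i ∈ s, (f i).totalDegree := by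
  classical
  induction s using Finset.induction_on with
  | empty => simp
  | @insert i s his ih =>
    rw [Finset.prod_insert his, Finset.sum_insert his,
      totalDegree_mul_eq (h i (Finset.mem_insert_self i s))
        (Finset.prod_ne_zero_iff.mpr fun j hj => h j (Finset.mem_insert_of_mem hj)),
      ih fun j hj => h j (Finset.mem_insert_of_mem hj)]



section Lfacts
variable {p m : ℕ}

noncomputable def Lf (p : ℕ) {m : ℕ} (ζ : ℂ) (i : Fin m → Fin p) : MvPolynomial (Fin m) ℂ :=
  1 - ∑ k, C (ζ ^ (i k : ℕ)) * X k

lemma coeff_Lf_zero (ζ : ℂ) (i : Fin m → Fin p) : coeff 0 (Lf p ζ i) = 1 := by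
  rw [Lf, coeff_sub, coeff_one, if_pos rfl, coeff_sum]
  have h1 : ∀ k ∈ Finset.univ (α := Fin m),
      coeff 0 (C (ζ ^ (i k : ℕ)) * X k) = 0 := fun k _ => by
    rw [coeff_C_mul, coeff_X', if_neg, mul_zero]
    exact fun h => (one_ne_zero (α := ℕ)) (Finsupp.single_eq_zero.mp h)
  rw [Finset.sum_congr rfl h1, Finset.sum_const_zero, sub_zero]

lemma coeff_Lf_single (ζ : ℂ) (i : Fin m → Fin p) (k : Fin m) :
    coeff (Finsupp.single k 1) (Lf p ζ i) = -ζ ^ (i k : ℕ) := by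
  classical
  rw [Lf, coeff_sub, coeff_sum]
  have h0 : coeff (Finsupp.single k 1) (1 : MvPolynomial (Fin m) ℂ) = 0 := by
    rw [coeff_one, if_neg]
    exact fun h => (one_ne_zero (α := ℕ)) (Finsupp.single_eq_zero.mp h.symm)
  have h1 : ∀ k' ∈ Finset.univ (α := Fin m),
      coeff (Finsupp.single k 1) (C (ζ ^ (i k' : ℕ)) * X k')
        = if k' = k then ζ ^ (i k' : ℕ) else 0 := fun k' _ => by
    rw [coeff_C_mul, coeff_X']
    by_cases h : k' = k
    · rw [if_pos (by rw [h]), if_pos h, mul_one]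
    · rw [if_neg (fun he => h (Finsupp.single_left_injective one_ne_zero he)), if_neg h,
        mul_zero]
  rw [Finset.sum_congr rfl h1, Finset.sum_ite_eq' Finset.univ k fun k' => ζ ^ (i k' : ℕ),
    if_pos (Finset.mem_univ k), h0]
  ring

lemma Lf_ne_zero (ζ : ℂ) (i : Fin m → Fin p) : Lf p ζ i ≠ 0 := fun h => by
  have := coeff_Lf_zero ζ i
  rw [h, MvPolynomial.coeff_zero] at this
  exact one_ne_zero this.symm

lemma totalDegree_Lf (hm : 1 ≤ m) {ζ : ℂ} (hζ0 : ζ ≠ 0) (i : Fin m → Fin p) :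
    (Lf p ζ i).totalDegree = 1 := by
  refine le_antisymm ?_ ?_
  · refine le_trans (totalDegree_sub _ _) (max_le (by simp) ?_)
    refine le_trans (totalDegree_finset_sum _ _) (Finset.sup_le fun k _ => ?_)
    refine le_trans (totalDegree_mul _ _) ?_
    rw [totalDegree_C, totalDegree_X]
  · set k0 : Fin m := ⟨0, hm⟩
    have h1 : coeff (Finsupp.single k0 1) (Lf p ζ i) ≠ 0 := by
      rw [coeff_Lf_single]
      simpa using pow_ne_zero _ hζ0
    have := le_totalDegree (p := Lf p ζ i) (mem_support_iff.mpr h1)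
    simpa using this

lemma Lf_dvd_eq (hp : 2 ≤ p) (hm : 1 ≤ m) {ζ : ℂ} (hζ : IsPrimitiveRoot ζ p)
    {i j : Fin m → Fin p} (h : Lf p ζ i ∣ Lf p ζ j) : i = j := by
  have hζ0 : ζ ≠ 0 := fun h0 => by
    have := hζ.pow_eq_one
    rw [h0, zero_pow (by omega)] at this
    exact zero_ne_one this
  obtain ⟨c, hc⟩ := h
  have hc0 : c ≠ 0 := fun h0 => Lf_ne_zero ζ j (by rw [hc, h0, mul_zero])
  have hdeg : (Lf p ζ j).totalDegree = 1 + c.totalDegree := by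
    rw [hc, totalDegree_mul_eq (Lf_ne_zero ζ i) hc0, totalDegree_Lf hm hζ0]
  rw [totalDegree_Lf hm hζ0] at hdeg
  have hcd : c.totalDegree = 0 := by omega
  have hcC : c = C (coeff 0 c) := eq_C_of_totalDegree_zero hcd
  have h00 : coeff 0 c = 1 := by
    have h3 := congrArg (coeff 0) hc
    rw [coeff_Lf_zero, hcC, mul_comm, coeff_C_mul, coeff_Lf_zero, mul_one] at h3
    exact h3.symm
  have hc1 : c = 1 := by rw [hcC, h00, map_one]
  rw [hc1, mul_one] at hc
  funext k
  have h4 := congrArg (coeff (Finsupp.single k 1)) hc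
  rw [coeff_Lf_single, coeff_Lf_single, neg_inj] at h4
  exact (Fin.ext (hζ.pow_inj (j k).isLt (i k).isLt h4)).symm

lemma pow_mod_eq {M : Type*} [Monoid M] {ζ : M} {p : ℕ} (h : ζ ^ p = 1) (n : ℕ) :
    ζ ^ (n % p) = ζ ^ n := by
  conv_rhs => rw [← Nat.div_add_mod n p]
  rw [pow_add, pow_mul, h, one_pow, one_mul]

lemma scl_Lf {ζ : ℂ} (hζp : ζ ^ p = 1) (a i : Fin m → Fin p) :
    scl (fun k => ζ ^ ((a k : Fin p) : ℕ)) (Lf p ζ i) = Lf p ζ (i + a) := by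
  rw [Lf, Lf, map_sub, map_one, map_sum]
  congr 1
  refine Finset.sum_congr rfl fun k _ => ?_
  rw [map_mul, scl, bind₁_X_right, bind₁_C_right, ← mul_assoc, ← C_mul, ← pow_add]
  have h1 : (((i + a) k : Fin p) : ℕ) = ((i k : ℕ) + (a k : ℕ)) % p := by
    rw [Pi.add_apply, Fin.val_add]
  rw [h1, pow_mod_eq hζp]

lemma scl_A {K : Type*} [Field K] {c : Fin m → K} (hc : ∀ k, c k ^ p = 1)
    (g : MvPolynomial (Fin m) K) : scl c (A p g) = A p g := by
  rw [A, scl, bind₁_bind₁]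
  have h1 : (fun k : Fin m => bind₁ (fun k' : Fin m => C (c k') * X k') ((X k : MvPolynomial (Fin m) K) ^ p))
      = fun k : Fin m => (X k : MvPolynomial (Fin m) K) ^ p := funext fun k => by
    rw [map_pow, bind₁_X_right, mul_pow, ← C_pow, hc k, map_one, one_mul]
  rw [h1]

end Lfacts
end FCaux

open scoped BigOperators
open MvPolynomial


/-- the polynomial
`R̃(z) = ∏_{(i_1,…,i_m) ∈ {0,…,p−1}^m} (1 − ζ^{i_1}z_1 − ⋯ − ζ^{i_m}z_m)`
descends to a polynomial `P` in the variables `x_k = z_k^p`; this `P` has total degree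
`p^{m−1}` and is irreducible in `ℂ[x_1,…,x_m]`. -/
theorem FCpm_singular_polynomial_exists (p m : ℕ) (hp : 2 ≤ p) (hm : 1 ≤ m) (ζ : ℂ)
    (hζ : ζ = Complex.exp (2 * Real.pi * Complex.I / p)) :
    ∃ P : MvPolynomial (Fin m) ℂ,
      MvPolynomial.bind₁ (fun k : Fin m => (MvPolynomial.X k) ^ p) P =
        ∏ i : Fin m → Fin p,
          (1 - ∑ k : Fin m, MvPolynomial.C (ζ ^ (i k : ℕ)) * MvPolynomial.X k) ∧
      P.totalDegree = p ^ (m - 1) ∧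
      Irreducible P := by
    classical
  have hp0 : p ≠ 0 := by omega
  haveI : NeZero p := ⟨hp0⟩
  have hprim : IsPrimitiveRoot ζ p := by
    rw [hζ]
    exact_mod_cast Complex.isPrimitiveRoot_exp p hp0
  have hζp : ζ ^ p = 1 := hprim.pow_eq_one
  have hζ0 : ζ ≠ 0 := fun h0 => by
    rw [h0, zero_pow hp0] at hζp
    exact zero_ne_one hζp
  set Rt : MvPolynomial (Fin m) ℂ := ∏ i : Fin m → Fin p, FCaux.Lf p ζ i with hRt
  have hRt0 : Rt ≠ 0 := Finset.prod_ne_zero_iff.mpr fun i _ => FCaux.Lf_ne_zero ζ i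
  have hdegRt : Rt.totalDegree = p ^ m := by
    rw [hRt, FCaux.totalDegree_prod_eq _ _ fun i _ => FCaux.Lf_ne_zero ζ i,
      Finset.sum_congr rfl fun i _ => FCaux.totalDegree_Lf hm hζ0 i,
      Finset.sum_const, smul_eq_mul, mul_one, Finset.card_univ, Fintype.card_fun]
    simp
  -- invariance under scaling by roots of unity
  have hinv : ∀ a : Fin m → Fin p,
      FCaux.scl (fun k => ζ ^ ((a k : Fin p) : ℕ)) Rt = Rt := by
    intro a
    rw [hRt, map_prod, Finset.prod_congr rfl fun i _ => FCaux.scl_Lf hζp a i]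
    exact Equiv.prod_comp (Equiv.addRight a) (FCaux.Lf p ζ)
  -- exponents divisible by p
  have hdvd : ∀ d ∈ Rt.support, ∀ k, p ∣ d k := by
    intro d hd k
    set a : Fin m → Fin p := Pi.single k 1 with ha
    have hsc := FCaux.coeff_scl (fun k' => ζ ^ ((a k' : Fin p) : ℕ)) Rt d
    rw [hinv a] at hsc
    have hprod : (∏ k', (ζ ^ ((a k' : Fin p) : ℕ)) ^ d k') = ζ ^ d k := by
      rw [Finset.prod_eq_single k ?_ (fun h => absurd (Finset.mem_univ k) h)]
      · have h1 : ((a k : Fin p) : ℕ) = 1 := by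
          rw [ha, Pi.single_eq_same, Fin.val_one', Nat.mod_eq_of_lt (by omega)]
        rw [h1, ← pow_mul, one_mul]
      · intro k' _ hk'
        rw [ha, Pi.single_eq_of_ne hk', Fin.val_zero, pow_zero, one_pow]
    rw [hprod] at hsc
    have hcne : coeff d Rt ≠ 0 := mem_support_iff.mp hd
    have hone : ζ ^ d k * coeff d Rt = 1 * coeff d Rt := by rw [one_mul, ← hsc]
    exact (hprim.pow_eq_one_iff_dvd _).mp (mul_right_cancel₀ hcne hone)
  -- define P
  set P : MvPolynomial (Fin m) ℂ :=
    ∑ d ∈ Rt.support, monomial (Finsupp.mapRange (· / p) (Nat.zero_div p) d) (coeff d Rt)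
    with hPdef
  have hAP : FCaux.A p P = Rt := by
    rw [hPdef, map_sum,
      Finset.sum_congr rfl fun d hd => (by
        rw [FCaux.A_monomial]
        have he : FCaux.emul p (Finsupp.mapRange (· / p) (Nat.zero_div p) d) = d := by
          ext k
          rw [FCaux.emul_apply, Finsupp.mapRange_apply]
          exact Nat.mul_div_cancel' (hdvd d hd k)
        rw [he] :
          FCaux.A p (monomial (Finsupp.mapRange (· / p) (Nat.zero_div p) d) (coeff d Rt))
            = monomial d (coeff d Rt))]
    exact (as_sum Rt).symm
  have hP0 : P ≠ 0 := fun h0 => hRt0 (by rw [← hAP, h0, map_zero])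
  have hdegP : P.totalDegree = p ^ (m - 1) := by
    have h1 : p * P.totalDegree = p ^ m := by
      rw [← FCaux.totalDegree_A hp0, hAP, hdegRt]
    have h2 : p ^ m = p * p ^ (m - 1) := by
      conv_lhs => rw [← Nat.succ_pred_eq_of_pos (by omega : 0 < m)]
      rw [pow_succ']
      rfl
    exact Nat.eq_of_mul_eq_mul_left (by omega) (h1.trans h2)
  have hLirr : ∀ i : Fin m → Fin p, Irreducible (FCaux.Lf p ζ i) := fun i =>
    FCaux.irreducible_of_totalDegree_one (FCaux.totalDegree_Lf hm hζ0 i)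
  have hLprime : ∀ i : Fin m → Fin p, Prime (FCaux.Lf p ζ i) := fun i =>
    UniqueFactorizationMonoid.irreducible_iff_prime.mp (hLirr i)
  have hunitA : ∀ g : MvPolynomial (Fin m) ℂ, ¬IsUnit g → g ≠ 0 →
      ¬IsUnit (FCaux.A p g) := by
    intro g hg hg0 hu
    have h1 := FCaux.totalDegree_eq_zero_of_isUnit hu
    rw [FCaux.totalDegree_A hp0] at h1
    exact hg (FCaux.isUnit_of_totalDegree_zero hg0 (by
      rcases Nat.mul_eq_zero.mp h1 with h | h
      · exact absurd h hp0
      · exact h))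
  have key : ∀ g : MvPolynomial (Fin m) ℂ, ¬IsUnit g → g ≠ 0 → FCaux.A p g ∣ Rt →
      ∀ j : Fin m → Fin p, FCaux.Lf p ζ j ∣ FCaux.A p g := by
    intro g hg hg0 hdvdRt j
    obtain ⟨q, hqirr, hqdvd⟩ := WfDvdMonoid.exists_irreducible_factor
      (hunitA g hg hg0) (FCaux.A_ne_zero hp0 hg0)
    have hqRt : q ∣ ∏ i : Fin m → Fin p, FCaux.Lf p ζ i := hqdvd.trans hdvdRt
    obtain ⟨i0, _, hqi0⟩ := Prime.exists_mem_finset_dvd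
      (UniqueFactorizationMonoid.irreducible_iff_prime.mp hqirr) hqRt
    have hassoc : Associated q (FCaux.Lf p ζ i0) := hqirr.associated_of_dvd (hLirr i0) hqi0
    have hi0 : FCaux.Lf p ζ i0 ∣ FCaux.A p g := hassoc.symm.dvd.trans hqdvd
    have ha : FCaux.scl (fun k => ζ ^ (((j - i0) k : Fin p) : ℕ)) (FCaux.Lf p ζ i0)
        = FCaux.Lf p ζ j := by
      rw [FCaux.scl_Lf hζp]
      congr 1
      abel
    have hc1 : ∀ k : Fin m, (ζ ^ (((j - i0) k : Fin p) : ℕ)) ^ p = 1 := fun k => by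
      rw [← pow_mul, mul_comm, pow_mul, hζp, one_pow]
    calc FCaux.Lf p ζ j
        = FCaux.scl (fun k => ζ ^ (((j - i0) k : Fin p) : ℕ)) (FCaux.Lf p ζ i0) := ha.symm
      _ ∣ FCaux.scl (fun k => ζ ^ (((j - i0) k : Fin p) : ℕ)) (FCaux.A p g) :=
          map_dvd _ hi0
      _ = FCaux.A p g := FCaux.scl_A hc1 g
  refine ⟨P, hAP, hdegP, ?_, ?_⟩
  · intro hu
    have h1 := FCaux.totalDegree_eq_zero_of_isUnit hu
    rw [hdegP] at h1
    have h2 : 0 < p ^ (m - 1) := pow_pos (by omega) _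
    omega
  · rintro a b hab
    by_contra hcon
    push_neg at hcon
    obtain ⟨hna, hnb⟩ := hcon
    have ha0 : a ≠ 0 := fun h => hP0 (by rw [hab, h, zero_mul])
    have hb0 : b ≠ 0 := fun h => hP0 (by rw [hab, h, mul_zero])
    have hdvda : FCaux.A p a ∣ Rt := ⟨FCaux.A p b, by rw [← map_mul, ← hab, hAP]⟩
    have hdvdb : FCaux.A p b ∣ Rt := ⟨FCaux.A p a, by rw [← map_mul, mul_comm b a, ← hab, hAP]⟩
    set i0 : Fin m → Fin p := fun _ => 0 with hi0def
    have h2 : FCaux.Lf p ζ i0 * FCaux.Lf p ζ i0 ∣ Rt := by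
      have h3 := mul_dvd_mul (key a hna ha0 hdvda i0) (key b hnb hb0 hdvdb i0)
      rwa [← map_mul, ← hab, hAP] at h3
    obtain ⟨c, hc⟩ := h2
    have hsplit : Rt = FCaux.Lf p ζ i0 * ∏ i ∈ Finset.univ.erase i0, FCaux.Lf p ζ i := by
      rw [hRt, Finset.mul_prod_erase Finset.univ _ (Finset.mem_univ i0)]
    have hcancel : FCaux.Lf p ζ i0 * c = ∏ i ∈ Finset.univ.erase i0, FCaux.Lf p ζ i := by
      apply mul_left_cancel₀ (FCaux.Lf_ne_zero ζ i0)
      rw [← mul_assoc, ← hc, hsplit]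
    obtain ⟨j, hjmem, hjd⟩ := Prime.exists_mem_finset_dvd (hLprime i0) ⟨c, hcancel.symm⟩
    exact (Finset.mem_erase.mp hjmem).1 (FCaux.Lf_dvd_eq hp hm hprim hjd).symm
end

section
/- Let p ≥ 2 and m ≥ 1 be integers and ζ = exp(2π√−1/p). Let A be the localization of the polynomial ring ℂ[z_1,…,z_m] away from the element z_1⋯z_m·∏_{(i_1,…,i_m)∈{0,…,p−1}^m}(1 − ζ^{i_1}z_1 − ⋯ − ζ^{i_m}z_m). In the polynomial ring A[ξ_1,…,ξ_m], set M_k = ξ_k^p − ξ_m^p for 1 ≤ k ≤ m−1 and M_m = ξ_m^p − (z_1ξ_1 + ⋯ + z_mξ_m)^p (where z_j denotes the image of z_j in A). Then the sequence M_1, …, M_{m−1}, M_m is a regular sequence in A[ξ_1,…,ξ_m]. -/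
set_option synthInstance.maxHeartbeats 400000
open scoped BigOperators
open MvPolynomial

namespace FC9aux
open Finset



variable {D : Type*} [CommRing D] {p m k : ℕ} {ζ : D} {L : Fin m}

/-- substitution target functions -/
noncomputable def sfun (p k : ℕ) (ζ : D) {m : ℕ} (L : Fin m) (i : Fin m → Fin p) :
    Fin m → MvPolynomial (Fin m) D :=
  fun j => if (j : ℕ) < k then C (ζ ^ (i j : ℕ)) * X L else X j

noncomputable def E0 (k : ℕ) {m : ℕ} (L : Fin m) (e : Fin m →₀ ℕ) : Fin m →₀ ℕ :=
  Finsupp.equivFunOnFinite.symm fun j =>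
    if (j : ℕ) < k then 0
    else if j = L then e L + ∑ j' ∈ univ.filter (fun j' : Fin m => (j' : ℕ) < k), e j'
    else e j

noncomputable def E1 (p k : ℕ) {m : ℕ} (L : Fin m) (e : Fin m →₀ ℕ) : Fin m →₀ ℕ :=
  Finsupp.equivFunOnFinite.symm fun j =>
    if (j : ℕ) < k then e j % p
    else if j = L then e L + p * ∑ j' ∈ univ.filter (fun j' : Fin m => (j' : ℕ) < k), e j' / p
    else e j

noncomputable def E2 (p k : ℕ) {m : ℕ} (e : Fin m →₀ ℕ) : Fin m →₀ ℕ :=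
  Finsupp.equivFunOnFinite.symm fun j => if (j : ℕ) < k then e j % p else e j

lemma prodMonomial {α : Type*} (s : Finset α) (f : α → (Fin m →₀ ℕ)) (c : α → D) :
    (∏ a ∈ s, monomial (f a) (c a)) = monomial (∑ a ∈ s, f a) (∏ a ∈ s, c a) := by
  classical
  induction s using Finset.induction with
  | empty => simp [MvPolynomial.monomial_zero', MvPolynomial.C_1]
  | insert a s hx ih =>
    rw [Finset.prod_insert hx, Finset.prod_insert hx, Finset.sum_insert hx, ih, monomial_mul]

lemma sum_single_apply {g : Fin m → ℕ} (s : Finset (Fin m)) (j' : Fin m) :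
    (∑ j ∈ s, Finsupp.single j (g j)) j' = if j' ∈ s then g j' else 0 := by
  classical
  rw [Finsupp.finset_sum_apply]
  simp only [Finsupp.single_apply]
  exact Finset.sum_ite_eq' s j' g

lemma sum_single_eq_E0 (hLk : ¬ (L : ℕ) < k) (e : Fin m →₀ ℕ) :
    (∑ j : Fin m, Finsupp.single (if (j : ℕ) < k then L else j) (e j)) = E0 k L e := by
  classical
  ext j'
  rw [Finsupp.finset_sum_apply]
  simp only [Finsupp.single_apply, E0, Finsupp.coe_equivFunOnFinite_symm]
  by_cases h1 : (j' : ℕ) < k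
  · rw [if_pos h1]
    apply Finset.sum_eq_zero
    intro j _
    by_cases hj : (j : ℕ) < k
    · rw [if_pos hj, if_neg]; intro hLj'; exact hLk (hLj' ▸ h1)
    · rw [if_neg hj, if_neg]; intro hjj'; exact hj (hjj' ▸ h1)
  · rw [if_neg h1]
    by_cases h2 : j' = L
    · rw [if_pos h2]
      have : ∀ j : Fin m, (if (if (j : ℕ) < k then L else j) = j' then e j else 0)
          = if ((j : ℕ) < k ∨ j = j') then e j else 0 := by
        intro j
        by_cases hj : (j : ℕ) < k
        · rw [if_pos hj, if_pos (Or.inl hj), if_pos (h2 ▸ rfl)]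
        · rw [if_neg hj]
          by_cases hjj : j = j'
          · rw [if_pos hjj, if_pos (Or.inr hjj)]
          · rw [if_neg hjj, if_neg (by tauto)]
      rw [Finset.sum_congr rfl fun j _ => this j, Finset.sum_ite, Finset.sum_const_zero,
        add_zero, Finset.filter_or]
      rw [Finset.sum_union]
      · rw [Finset.filter_eq', if_pos (Finset.mem_univ j'), Finset.sum_singleton, h2, add_comm]
      · rw [Finset.disjoint_left]
        intro x hx hx2
        rw [Finset.mem_filter] at hx hx2
        exact h1 (hx2.2 ▸ hx.2)
    · rw [if_neg h2]
      rw [Finset.sum_eq_single j']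
      · rw [if_neg h1, if_pos rfl]
      · intro j _ hjj
        by_cases hj : (j : ℕ) < k
        · rw [if_pos hj, if_neg (fun h => h2 h.symm)]
        · rw [if_neg hj, if_neg hjj]
      · intro h; exact absurd (Finset.mem_univ j') h

lemma E0_inj (hLk : ¬ (L : ℕ) < k) {e e' : Fin m →₀ ℕ}
    (h1 : ∀ j : Fin m, (j : ℕ) < k → e j = e' j) (h2 : E0 k L e = E0 k L e') : e = e' := by
  ext j'
  by_cases hj : (j' : ℕ) < k
  · exact h1 j' hj
  · have := congrArg (fun f => f j') h2
    simp only [E0, Finsupp.coe_equivFunOnFinite_symm, if_neg hj] at this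
    by_cases hl : j' = L
    · rw [if_pos hl, if_pos hl] at this
      have hs : (∑ j ∈ univ.filter (fun j'' : Fin m => (j'' : ℕ) < k), e j)
          = ∑ j ∈ univ.filter (fun j'' : Fin m => (j'' : ℕ) < k), e' j := by
        apply Finset.sum_congr rfl
        intro j hjm
        exact h1 j (Finset.mem_filter.mp hjm).2
      rw [hl]
      omega
    · rwa [if_neg hl, if_neg hl] at this

lemma aeval_sfun_monomial (hLk : ¬ (L : ℕ) < k) (i : Fin m → Fin p) (e : Fin m →₀ ℕ) (c : D) :
    aeval (sfun p k ζ L i) (monomial e c) =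
      monomial (E0 k L e)
        (ζ ^ (∑ j ∈ univ.filter (fun j : Fin m => (j : ℕ) < k), (i j : ℕ) * e j) * c) := by
  classical
  rw [aeval_monomial]
  have h1 : e.prod (fun j d => sfun p k ζ L i j ^ d) = ∏ j : Fin m, sfun p k ζ L i j ^ e j :=
    Finsupp.prod_fintype _ _ (fun j => pow_zero _)
  have h2 : ∀ j : Fin m, sfun p k ζ L i j ^ e j
      = monomial (Finsupp.single (if (j : ℕ) < k then L else j) (e j))
          (if (j : ℕ) < k then ζ ^ ((i j : ℕ) * e j) else 1) := by
    intro j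
    by_cases hj : (j : ℕ) < k
    · simp only [sfun, if_pos hj]
      rw [mul_pow, ← C_pow, ← pow_mul, X_pow_eq_monomial, C_mul_monomial, mul_one]
    · simp only [sfun, if_neg hj]
      rw [X_pow_eq_monomial]
  rw [h1, Finset.prod_congr rfl (fun j _ => h2 j), prodMonomial, sum_single_eq_E0 hLk]
  have h3 : (∏ j : Fin m, if (j : ℕ) < k then ζ ^ ((i j : ℕ) * e j) else 1)
      = ζ ^ (∑ j ∈ univ.filter (fun j : Fin m => (j : ℕ) < k), (i j : ℕ) * e j) := by
    rw [← Finset.prod_filter, Finset.prod_pow_eq_pow_sum]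
  rw [h3, algebraMap_eq, C_mul_monomial, mul_comm]






lemma decompE2 (hp : 0 < p) (e : Fin m →₀ ℕ) :
    e = E2 p k e + ∑ j ∈ univ.filter (fun j : Fin m => (j : ℕ) < k),
      Finsupp.single j (p * (e j / p)) := by
  ext j'
  rw [Finsupp.add_apply, sum_single_apply]
  simp only [E2, Finsupp.coe_equivFunOnFinite_symm, Finset.mem_filter, Finset.mem_univ,
    true_and]
  by_cases hj : (j' : ℕ) < k
  · rw [if_pos hj, if_pos hj]
    have := Nat.mod_add_div (e j') p
    omega
  · rw [if_neg hj, if_neg hj, add_zero]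

lemma decompE1 (hLk : ¬ (L : ℕ) < k) (e : Fin m →₀ ℕ) :
    E1 p k L e = E2 p k e + Finsupp.single L
      (p * ∑ j ∈ univ.filter (fun j : Fin m => (j : ℕ) < k), e j / p) := by
  ext j'
  rw [Finsupp.add_apply, Finsupp.single_apply]
  simp only [E1, E2, Finsupp.coe_equivFunOnFinite_symm]
  by_cases hj : (j' : ℕ) < k
  · rw [if_pos hj, if_pos hj, if_neg (fun h : L = j' => hLk (h ▸ hj)), add_zero]
  · rw [if_neg hj, if_neg hj]
    by_cases hl : j' = L
    · rw [if_pos hl, if_pos hl.symm, hl]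
    · rw [if_neg hl, if_neg (fun h => hl h.symm), add_zero]

lemma monomial_sub_E1_mem (hLk : ¬ (L : ℕ) < k) (J : Ideal (MvPolynomial (Fin m) D))
    (hJ : ∀ j : Fin m, (j : ℕ) < k → X j ^ p - X L ^ p ∈ J) (e : Fin m →₀ ℕ) (c : D) :
    monomial e c - monomial (E1 p k L e) c ∈ J := by
  classical
  by_cases hp : 0 < p
  swap
  · -- p = 0 : E1 e = e?
    have hp0 : p = 0 := by omega
    have : E1 p k L e = e := by
      ext j'
      simp only [E1, Finsupp.coe_equivFunOnFinite_symm, hp0]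
      by_cases hj : (j' : ℕ) < k
      · rw [if_pos hj, Nat.mod_zero]
      · rw [if_neg hj]
        by_cases hl : j' = L
        · rw [if_pos hl, hl]; ring
        · rw [if_neg hl]
    rw [this, sub_self]
    exact J.zero_mem
  rw [← Ideal.Quotient.eq]
  set π := Ideal.Quotient.mk J with hπ
  set F := univ.filter (fun j : Fin m => (j : ℕ) < k) with hF
  have hsplit1 : monomial e c = monomial (E2 p k e) c *
      ∏ j ∈ F, (X j : MvPolynomial (Fin m) D) ^ (p * (e j / p)) := by
    have : ∀ j ∈ F, (X j : MvPolynomial (Fin m) D) ^ (p * (e j / p))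
        = monomial (Finsupp.single j (p * (e j / p))) 1 := fun j _ => X_pow_eq_monomial
    rw [Finset.prod_congr rfl this, prodMonomial, monomial_mul, Finset.prod_const_one, mul_one, hF,
      ← decompE2 hp]
  have hsplit2 : monomial (E1 p k L e) c = monomial (E2 p k e) c *
      (X L : MvPolynomial (Fin m) D) ^ (p * ∑ j ∈ F, e j / p) := by
    rw [X_pow_eq_monomial, monomial_mul, mul_one, ← decompE1 hLk]
  rw [hsplit1, hsplit2, map_mul, map_mul]
  congr 1
  have hXp : ∀ j ∈ F, (π (X j)) ^ p = (π (X L)) ^ p := by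
    intro j hj
    have hjk : (j : ℕ) < k := (Finset.mem_filter.mp hj).2
    have := Ideal.Quotient.eq_zero_iff_mem.mpr (hJ j hjk)
    rw [map_sub, map_pow, map_pow, sub_eq_zero] at this
    exact this
  rw [map_prod, map_pow]
  calc ∏ j ∈ F, π ((X j : MvPolynomial (Fin m) D) ^ (p * (e j / p)))
      = ∏ j ∈ F, ((π (X L)) ^ p) ^ (e j / p) := by
        refine Finset.prod_congr rfl fun j hj => ?_
        rw [map_pow, pow_mul, hXp j hj]
    _ = ((π (X L)) ^ p) ^ (∑ j ∈ F, e j / p) := Finset.prod_pow_eq_pow_sum F _ _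
    _ = (π (X L)) ^ (p * ∑ j ∈ F, e j / p) := by rw [← pow_mul]

lemma reduce (hLk : ¬ (L : ℕ) < k) (hp : 0 < p) (J : Ideal (MvPolynomial (Fin m) D))
    (hJ : ∀ j : Fin m, (j : ℕ) < k → X j ^ p - X L ^ p ∈ J) (t : MvPolynomial (Fin m) D) :
    ∃ u : MvPolynomial (Fin m) D, t - u ∈ J ∧
      ∀ e ∈ u.support, ∀ j : Fin m, (j : ℕ) < k → e j < p := by
  classical
  induction t using MvPolynomial.induction_on' with
  | monomial e c =>
    refine ⟨monomial (E1 p k L e) c, monomial_sub_E1_mem hLk J hJ e c, ?_⟩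
    intro e' he' j hj
    rw [MvPolynomial.support_monomial] at he'
    by_cases hc : c = 0
    · rw [if_pos hc] at he'; exact absurd he' (Finset.notMem_empty e')
    · rw [if_neg hc, Finset.mem_singleton] at he'
      subst he'
      simp only [E1, Finsupp.coe_equivFunOnFinite_symm, if_pos hj]
      exact Nat.mod_lt _ hp
  | add t1 t2 ih1 ih2 =>
    obtain ⟨u1, hu1, hnf1⟩ := ih1
    obtain ⟨u2, hu2, hnf2⟩ := ih2
    refine ⟨u1 + u2, ?_, ?_⟩
    · have : t1 + t2 - (u1 + u2) = (t1 - u1) + (t2 - u2) := by ring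
      rw [this]; exact J.add_mem hu1 hu2
    · intro e he j hj
      rcases Finset.mem_union.mp (MvPolynomial.support_add he) with h | h
      · exact hnf1 e h j hj
      · exact hnf2 e h j hj



lemma pow_mod_eq {x : D} (hx : x ^ p = 1) (c : ℕ) : x ^ c = x ^ (c % p) := by
  conv_lhs => rw [← Nat.div_add_mod c p, pow_add, pow_mul, hx, one_pow, one_mul]

lemma charSum [IsDomain D] (hp : 0 < p) (hζp : ζ ^ p = 1)
    (hζprim : ∀ c : ℕ, 0 < c → c < p → ζ ^ c ≠ 1) (a b : ℕ) (ha : a < p) (hb : b < p) :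
    ∑ l ∈ Finset.range p, (ζ ^ (a + (p - 1) * b)) ^ l = if a = b then (p : D) else 0 := by
  have hcb : (a + (p - 1) * b) + b = a + p * b := by
    have : (p - 1) * b + b = p * b := by
      have h1 : p - 1 + 1 = p := Nat.succ_pred_eq_of_pos hp
      calc (p - 1) * b + b = ((p - 1) + 1) * b := by ring
        _ = p * b := by rw [h1]
    omega
  by_cases hab : a = b
  · rw [if_pos hab]
    have hc : ζ ^ (a + (p - 1) * b) = 1 := by
      rw [pow_mod_eq hζp]
      have : (a + (p - 1) * b) % p = 0 := by
        have h2 : (a + (p - 1) * b) + b = p * b + a := by omega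
        have : a + (p - 1) * b = p * b + a - b := by omega
        rw [this, hab]
        have : p * b + b - b = p * b := by omega
        rw [this, Nat.mul_mod_right]
      rw [this, pow_zero]
    rw [hc]
    simp
  · rw [if_neg hab]
    set x := ζ ^ (a + (p - 1) * b) with hx
    have hxp : x ^ p = 1 := by rw [hx, ← pow_mul, mul_comm, pow_mul, hζp, one_pow]
    have hx1 : x ≠ 1 := by
      rw [hx, pow_mod_eq hζp]
      have hmodne : (a + (p - 1) * b) % p ≠ 0 := by
        intro h0
        obtain ⟨t, ht⟩ := Nat.dvd_of_mod_eq_zero h0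
        have e1 : a = (a + p * b) % p := by
          rw [Nat.add_mul_mod_self_left, Nat.mod_eq_of_lt ha]
        have e2 : b = (p * t + b) % p := by
          rw [Nat.mul_add_mod, Nat.mod_eq_of_lt hb]
        apply hab
        rw [e1, ← hcb, ht, ← e2]
      exact hζprim _ (Nat.pos_of_ne_zero hmodne) (Nat.mod_lt _ hp)
    have := geom_sum_mul x p
    rw [hxp, sub_self] at this
    rcases mul_eq_zero.mp this with h | h
    · exact h
    · exact absurd (sub_eq_zero.mp h) hx1


lemma nf_inj [IsDomain D] (hp : 0 < p) (hpD : (p : D) ≠ 0) (hζp : ζ ^ p = 1)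
    (hζprim : ∀ c : ℕ, 0 < c → c < p → ζ ^ c ≠ 1) (hLk : ¬ (L : ℕ) < k)
    (u : MvPolynomial (Fin m) D)
    (hNF : ∀ e ∈ u.support, ∀ j : Fin m, (j : ℕ) < k → e j < p)
    (h0 : ∀ i : Fin m → Fin p, aeval (sfun p k ζ L i) u = 0) : u = 0 := by
  classical
  ext e₀
  rw [coeff_zero]
  by_cases he₀ : e₀ ∈ u.support
  swap
  · exact MvPolynomial.notMem_support_iff.mp he₀
  set W : (Fin m → Fin p) → (Fin m →₀ ℕ) → ℕ :=
    fun i e => ∑ j ∈ univ.filter (fun j : Fin m => (j : ℕ) < k), (i j : ℕ) * e j with hW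
  have expand : ∀ i : Fin m → Fin p, aeval (sfun p k ζ L i) u
      = ∑ e ∈ u.support, monomial (E0 k L e) (ζ ^ W i e * coeff e u) := by
    intro i
    conv_lhs => rw [MvPolynomial.as_sum u]
    rw [map_sum]
    exact Finset.sum_congr rfl fun e _ => aeval_sfun_monomial hLk i e (coeff e u)
  have h2 : ∀ i : Fin m → Fin p,
      (∑ e ∈ u.support, if E0 k L e = E0 k L e₀ then ζ ^ W i e * coeff e u else 0) = 0 := by
    intro i
    have hz : coeff (E0 k L e₀) (aeval (sfun p k ζ L i) u) = 0 := by rw [h0 i, coeff_zero]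
    rw [expand i, MvPolynomial.coeff_sum] at hz
    exact Eq.trans (Finset.sum_congr rfl fun e _ => (coeff_monomial _ _ _).symm) hz
  have h3 : (∑ e ∈ u.support, if E0 k L e = E0 k L e₀
      then (∑ i : Fin m → Fin p, ζ ^ (W i e + (p - 1) * W i e₀)) * coeff e u else 0) = 0 := by
    have swap1 : ∀ e, (if E0 k L e = E0 k L e₀
        then (∑ i : Fin m → Fin p, ζ ^ (W i e + (p - 1) * W i e₀)) * coeff e u else 0)
        = ∑ i : Fin m → Fin p,
            (if E0 k L e = E0 k L e₀ then ζ ^ (W i e + (p - 1) * W i e₀) * coeff e u else 0) := by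
      intro e
      split
      · rw [Finset.sum_mul]
      · rw [Finset.sum_const_zero]
    rw [Finset.sum_congr rfl (fun e _ => swap1 e), Finset.sum_comm]
    apply Finset.sum_eq_zero
    intro i _
    have hfac : ∀ e, (if E0 k L e = E0 k L e₀
        then ζ ^ (W i e + (p - 1) * W i e₀) * coeff e u else 0)
        = ζ ^ ((p - 1) * W i e₀) *
            (if E0 k L e = E0 k L e₀ then ζ ^ W i e * coeff e u else 0) := by
      intro e
      split
      · rw [← mul_assoc, ← pow_add, Nat.add_comm]
      · rw [mul_zero]
    rw [Finset.sum_congr rfl (fun e _ => hfac e), ← Finset.mul_sum, h2 i, mul_zero]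
  have hchar : ∀ e ∈ u.support, (∑ i : Fin m → Fin p, ζ ^ (W i e + (p - 1) * W i e₀))
      = ∏ j : Fin m, (if (j : ℕ) < k then (if e j = e₀ j then (p : D) else 0) else (p : D)) := by
    intro e he
    have hstep1 : ∀ i : Fin m → Fin p, ζ ^ (W i e + (p - 1) * W i e₀)
        = ∏ j : Fin m,
            (if (j : ℕ) < k then (ζ ^ (e j + (p - 1) * e₀ j)) ^ (i j : ℕ) else 1) := by
      intro i
      have hexp : W i e + (p - 1) * W i e₀
          = ∑ j ∈ univ.filter (fun j : Fin m => (j : ℕ) < k),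
              (i j : ℕ) * (e j + (p - 1) * e₀ j) := by
        rw [hW]
        simp only
        rw [Finset.mul_sum, ← Finset.sum_add_distrib]
        exact Finset.sum_congr rfl fun j _ => by ring
      rw [hexp, ← Finset.prod_filter]
      calc ζ ^ (∑ j ∈ univ.filter (fun j : Fin m => (j : ℕ) < k),
              (i j : ℕ) * (e j + (p - 1) * e₀ j))
          = ∏ j ∈ univ.filter (fun j : Fin m => (j : ℕ) < k),
              ζ ^ ((i j : ℕ) * (e j + (p - 1) * e₀ j)) :=
            (Finset.prod_pow_eq_pow_sum _ _ _).symm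
        _ = ∏ j ∈ univ.filter (fun j : Fin m => (j : ℕ) < k),
              (ζ ^ (e j + (p - 1) * e₀ j)) ^ (i j : ℕ) := by
            refine Finset.prod_congr rfl fun j _ => ?_
            rw [mul_comm, pow_mul]
    rw [Finset.sum_congr rfl (fun i _ => hstep1 i)]
    have hswap := Finset.prod_univ_sum (fun _ : Fin m => (univ : Finset (Fin p)))
      (fun j l => if (j : ℕ) < k then (ζ ^ (e j + (p - 1) * e₀ j)) ^ (l : ℕ) else 1)
    rw [Fintype.piFinset_univ] at hswap
    rw [← hswap]
    refine Finset.prod_congr rfl fun j _ => ?_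
    by_cases hj : (j : ℕ) < k
    · simp only [if_pos hj]
      rw [Fin.sum_univ_eq_sum_range (fun l => (ζ ^ (e j + (p - 1) * e₀ j)) ^ l) p,
        charSum hp hζp hζprim _ _ (hNF e he j hj) (hNF e₀ he₀ j hj)]
    · simp only [if_neg hj]
      rw [Finset.sum_const, Finset.card_univ, Fintype.card_fin, nsmul_eq_mul, mul_one]
  have hsum : (∑ e ∈ u.support, if E0 k L e = E0 k L e₀
      then (∑ i : Fin m → Fin p, ζ ^ (W i e + (p - 1) * W i e₀)) * coeff e u else 0)
      = (∏ _j : Fin m, (p : D)) * coeff e₀ u := by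
    rw [Finset.sum_eq_single_of_mem e₀ he₀]
    · rw [if_pos rfl, hchar e₀ he₀]
      congr 1
      exact Finset.prod_congr rfl fun j _ => by split <;> simp
    · intro e he hne
      by_cases hE : E0 k L e = E0 k L e₀
      · rw [if_pos hE, hchar e he]
        have hex : ∃ j : Fin m, (j : ℕ) < k ∧ e j ≠ e₀ j := by
          by_contra hcon
          push_neg at hcon
          exact hne (E0_inj hLk hcon hE)
        obtain ⟨j, hj, hjne⟩ := hex
        have hz : (∏ j : Fin m,
            (if (j : ℕ) < k then (if e j = e₀ j then (p : D) else 0) else (p : D))) = 0 :=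
          Finset.prod_eq_zero (Finset.mem_univ j) (by rw [if_pos hj, if_neg hjne])
        rw [hz, zero_mul]
      · rw [if_neg hE]
  rw [hsum] at h3
  rcases mul_eq_zero.mp h3 with h | h
  · refine absurd h ?_
    rw [Finset.prod_const]
    exact pow_ne_zero _ hpD
  · exact h

noncomputable def Jk (D : Type*) [CommRing D] (p k : ℕ) {m : ℕ} (L : Fin m) :
    Ideal (MvPolynomial (Fin m) D) :=
  Ideal.span ((fun j : Fin m => X j ^ p - X L ^ p) '' {j : Fin m | (j : ℕ) < k})

lemma gen_mem_Jk {j : Fin m} (hj : (j : ℕ) < k) :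
    X j ^ p - X L ^ p ∈ Jk D p k L :=
  Ideal.subset_span ⟨j, hj, rfl⟩

lemma aeval_sfun_gen (hζp : ζ ^ p = 1) (hLk : ¬ (L : ℕ) < k) (i : Fin m → Fin p)
    {j : Fin m} (hj : (j : ℕ) < k) :
    (aeval (sfun p k ζ L i) : MvPolynomial (Fin m) D →ₐ[D] MvPolynomial (Fin m) D)
      (X j ^ p - X L ^ p) = 0 := by
  rw [map_sub, map_pow, map_pow, aeval_X, aeval_X]
  simp only [sfun, if_pos hj, if_neg hLk]
  rw [mul_pow, ← C_pow, pow_right_comm, hζp, one_pow, C_1, one_mul, sub_self]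

lemma aeval_sfun_eq_zero_of_mem (hζp : ζ ^ p = 1) (hLk : ¬ (L : ℕ) < k)
    (i : Fin m → Fin p) {t : MvPolynomial (Fin m) D} (ht : t ∈ Jk D p k L) :
    aeval (sfun p k ζ L i) t = 0 := by
  have hle : Jk D p k L ≤ RingHom.ker
      ((aeval (sfun p k ζ L i) : MvPolynomial (Fin m) D →ₐ[D] MvPolynomial (Fin m) D)
        : MvPolynomial (Fin m) D →+* MvPolynomial (Fin m) D) := by
    rw [Jk, Ideal.span_le]
    rintro x ⟨j, hj, rfl⟩
    exact aeval_sfun_gen hζp hLk i hj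
  exact hle ht

lemma mem_Jk_of_aeval [IsDomain D] (hp : 0 < p) (hpD : (p : D) ≠ 0) (hζp : ζ ^ p = 1)
    (hζprim : ∀ c : ℕ, 0 < c → c < p → ζ ^ c ≠ 1) (hLk : ¬ (L : ℕ) < k)
    (t : MvPolynomial (Fin m) D)
    (ht : ∀ i : Fin m → Fin p, aeval (sfun p k ζ L i) t = 0) : t ∈ Jk D p k L := by
  obtain ⟨u, huJ, hNF⟩ := reduce hLk hp (Jk D p k L) (fun j hj => gen_mem_Jk hj) t
  have hu0 : u = 0 := by
    refine nf_inj hp hpD hζp hζprim hLk u hNF fun i => ?_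
    have h1 := aeval_sfun_eq_zero_of_mem hζp hLk i huJ
    rw [map_sub, ht i, zero_sub, neg_eq_zero] at h1
    exact h1
  rw [hu0, sub_zero] at huJ
  exact huJ

lemma key_nzd [IsDomain D] (hp : 0 < p) (hpD : (p : D) ≠ 0) (hζp : ζ ^ p = 1)
    (hζprim : ∀ c : ℕ, 0 < c → c < p → ζ ^ c ≠ 1) (hLk : ¬ (L : ℕ) < k)
    (c t : MvPolynomial (Fin m) D)
    (hc : ∀ i : Fin m → Fin p, aeval (sfun p k ζ L i) c ≠ 0)
    (h : c * t ∈ Jk D p k L) : t ∈ Jk D p k L := by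
  refine mem_Jk_of_aeval hp hpD hζp hζprim hLk t fun i => ?_
  have h1 := aeval_sfun_eq_zero_of_mem hζp hLk i h
  rw [map_mul] at h1
  exact (mul_eq_zero.mp h1).resolve_left (hc i)

lemma isSMulRegular_quot {R : Type*} [CommRing R] (I : Ideal R) (c : R)
    (h : ∀ t, c * t ∈ I → t ∈ I) : IsSMulRegular (R ⧸ (I • ⊤ : Submodule R R)) c := by
  have hI : (I • ⊤ : Submodule R R) = I := by rw [smul_eq_mul, Ideal.mul_top]
  intro x y hxy
  obtain ⟨a, rfl⟩ := Submodule.Quotient.mk_surjective _ x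
  obtain ⟨b, rfl⟩ := Submodule.Quotient.mk_surjective _ y
  simp only [← Submodule.Quotient.mk_smul] at hxy
  rw [Submodule.Quotient.eq] at hxy
  rw [Submodule.Quotient.eq]
  rw [hI] at hxy ⊢
  have heq : c • a - c • b = c * (a - b) := by
    rw [smul_eq_mul, smul_eq_mul, mul_sub]
  rw [heq] at hxy
  exact h _ hxy

lemma Xpow_sub_Xpow_ne_zero {R : Type*} [CommRing R] [Nontrivial R] {m p : ℕ} {j l : Fin m}
    (hjl : j ≠ l) (hp : p ≠ 0) : (X j : MvPolynomial (Fin m) R) ^ p - X l ^ p ≠ 0 := by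
  classical
  intro h
  have hc := congrArg (coeff (Finsupp.single j p)) h
  rw [coeff_sub, coeff_zero, MvPolynomial.coeff_X_pow, MvPolynomial.coeff_X_pow,
    if_pos rfl, if_neg (fun hh : Finsupp.single l p = Finsupp.single j p =>
      hjl (Finsupp.single_left_injective hp hh).symm), sub_zero] at hc
  exact one_ne_zero hc

end FC9aux

set_option maxHeartbeats 2000000 in
/-- over the coordinate ring `A = ℂ[z^±, 1/R(z)]` of the complement of the
pulled-back singular locus, the symbols `M_1 = ξ_1^p − ξ_m^p, …, M_{m−1} = ξ_{m−1}^p − ξ_m^p,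
M_m = ξ_m^p − (z_1ξ_1 + ⋯ + z_mξ_m)^p` form a regular sequence in `A[ξ_1,…,ξ_m]`. -/
theorem FCpm_symbols_regular_sequence (p m : ℕ) (hp : 2 ≤ p) (hm : 1 ≤ m) (ζ : ℂ)
    (hζ : ζ = Complex.exp (2 * Real.pi * Complex.I / p))
    (r : MvPolynomial (Fin m) ℂ)
    (hr : r = (∏ k : Fin m, X k) *
      ∏ i : Fin m → Fin p, (1 - ∑ k : Fin m, C (ζ ^ (i k : ℕ)) * X k))
    (M : Fin m → MvPolynomial (Fin m) (Localization.Away r))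
    (hM : ∀ k : Fin m, M k =
      if (k : ℕ) < m - 1 then
        X k ^ p - X (⟨m - 1, by omega⟩ : Fin m) ^ p
      else
        X (⟨m - 1, by omega⟩ : Fin m) ^ p -
          (∑ j : Fin m,
            C (algebraMap (MvPolynomial (Fin m) ℂ) (Localization.Away r) (X j)) * X j) ^ p) :
    RingTheory.Sequence.IsRegular (MvPolynomial (Fin m) (Localization.Away r))
      (List.ofFn M) := by
  classical
  have hp0 : 0 < p := by omega
  have hprim : IsPrimitiveRoot ζ p := by
    rw [hζ]; exact Complex.isPrimitiveRoot_exp p (by omega)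
  have hr0 : r ≠ 0 := by
    rw [hr]
    apply mul_ne_zero
    · exact Finset.prod_ne_zero_iff.mpr fun j _ => MvPolynomial.X_ne_zero j
    · refine Finset.prod_ne_zero_iff.mpr fun i _ => ?_
      intro hzero
      have hcc := congrArg MvPolynomial.constantCoeff hzero
      rw [map_sub, map_one, map_sum, map_zero] at hcc
      simp only [map_mul, constantCoeff_C, constantCoeff_X, mul_zero,
        Finset.sum_const_zero, sub_zero] at hcc
      exact one_ne_zero hcc
  have hle : Submonoid.powers r ≤ nonZeroDivisors (MvPolynomial (Fin m) ℂ) :=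
    powers_le_nonZeroDivisors_of_noZeroDivisors hr0
  haveI hdom : IsDomain (Localization.Away r) := IsLocalization.isDomain_localization hle
  set a : MvPolynomial (Fin m) ℂ →+* Localization.Away r :=
    algebraMap (MvPolynomial (Fin m) ℂ) (Localization.Away r) with ha
  have hainj : Function.Injective a := IsLocalization.injective (Localization.Away r) hle
  set ζA : Localization.Away r := a (MvPolynomial.C ζ) with hζA
  have hCinj : Function.Injective fun x : ℂ => a (MvPolynomial.C x) := fun x y h =>
    MvPolynomial.C_injective _ _ (hainj h)
  have hζApow : ∀ c : ℕ, ζA ^ c = a (MvPolynomial.C (ζ ^ c)) := by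
    intro c; rw [hζA, ← map_pow, ← map_pow]
  have hζAp : ζA ^ p = 1 := by
    rw [hζApow, hprim.pow_eq_one, map_one, map_one]
  have hζAprim : ∀ c : ℕ, 0 < c → c < p → ζA ^ c ≠ 1 := by
    intro c hc1 hc2 heq
    rw [hζApow] at heq
    have : a (MvPolynomial.C (ζ ^ c)) = a (MvPolynomial.C 1) := by rw [map_one, map_one, heq]
    exact hprim.pow_ne_one_of_pos_of_lt hc1.ne' hc2 (hCinj this)
  have hpA : (p : Localization.Away r) ≠ 0 := by
    intro h
    have h1 : ((p : ℕ) : MvPolynomial (Fin m) ℂ) ≠ 0 := Nat.cast_ne_zero.mpr (by omega)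
    apply h1
    apply hainj
    rw [map_natCast, h, map_zero]
  set L : Fin m := ⟨m - 1, by omega⟩ with hL
  -- identification of partial ideals
  have hofl : ∀ n : ℕ, n < m → Ideal.ofList ((List.ofFn M).take n) = FC9aux.Jk (Localization.Away r) p n L := by
    intro n hn
    have hnm : n ≤ m := le_of_lt hn
    rw [← Fin.ofFn_take_eq_take_ofFn hnm M]
    show Ideal.span _ = Ideal.span _
    congr 1
    ext x
    constructor
    · intro hx
      obtain ⟨j, rfl⟩ := List.mem_ofFn.mp hx
      have hjn : ((Fin.castLE hnm j : Fin m) : ℕ) < n := j.isLt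
      refine ⟨Fin.castLE hnm j, hjn, ?_⟩
      show _ = Fin.take n hnm M j
      simp only [Fin.take]
      rw [hM (Fin.castLE hnm j), if_pos (by omega)]
    · rintro ⟨j, hj, rfl⟩
      have hj' : (j : ℕ) < n := hj
      refine List.mem_ofFn.mpr ⟨⟨(j : ℕ), hj'⟩, ?_⟩
      show Fin.take n hnm M ⟨(j : ℕ), hj'⟩ = _
      simp only [Fin.take]
      have hcast : (Fin.castLE hnm ⟨(j : ℕ), hj'⟩ : Fin m) = j := by
        apply Fin.ext; rfl
      rw [hcast, hM j, if_pos (by omega)]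
  rw [RingTheory.Sequence.isRegular_iff]
  constructor
  · rw [RingTheory.Sequence.isWeaklyRegular_iff]
    intro n hn
    rw [List.length_ofFn] at hn
    have hgetel : ((List.ofFn M)[n]'(by rw [List.length_ofFn]; exact hn)) = M ⟨n, hn⟩ :=
      List.getElem_ofFn _
    rw [hgetel, hofl n hn]
    apply FC9aux.isSMulRegular_quot
    intro t hmem
    have hLk : ¬ ((L : ℕ) < n) := by show ¬ (m - 1 < n); omega
    refine FC9aux.key_nzd hp0 hpA hζAp hζAprim hLk _ t ?_ hmem
    intro i
    rw [hM ⟨n, hn⟩]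
    by_cases hcase : ((⟨n, hn⟩ : Fin m) : ℕ) < m - 1
    · rw [if_pos hcase]
      have hc2 : n < m - 1 := hcase
      have hvala : (aeval (FC9aux.sfun p n ζA L i))
          ((X (⟨n, hn⟩ : Fin m) ^ p - X L ^ p : MvPolynomial (Fin m) (Localization.Away r)))
          = X (⟨n, hn⟩ : Fin m) ^ p - X L ^ p := by
        rw [map_sub, map_pow, map_pow, aeval_X, aeval_X]
        simp only [FC9aux.sfun]
        rw [if_neg (show ¬ (((⟨n, hn⟩ : Fin m) : ℕ) < n) from lt_irrefl n), if_neg hLk]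
      rw [hvala]
      exact FC9aux.Xpow_sub_Xpow_ne_zero
        (Fin.ne_of_val_ne (show n ≠ m - 1 by omega)) (by omega)
    · rw [if_neg hcase]
      have hcase' : ¬ n < m - 1 := hcase
      set w : Localization.Away r :=
        ∑ j : Fin m, a (X j) * (if (j : ℕ) < n then ζA ^ (i j : ℕ) else 1) with hw
      have hsum : (aeval (FC9aux.sfun p n ζA L i))
          (∑ j : Fin m, (C (a (X j)) : MvPolynomial (Fin m) (Localization.Away r)) * X j)
          = C w * X L := by
        rw [map_sum]
        have hterm : ∀ j : Fin m, (aeval (FC9aux.sfun p n ζA L i)) (C (a (X j)) * X j)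
            = C (a (X j) * (if (j : ℕ) < n then ζA ^ (i j : ℕ) else 1)) * X L := by
          intro j
          rw [map_mul, aeval_C, aeval_X]
          simp only [FC9aux.sfun]
          by_cases hj : (j : ℕ) < n
          · rw [if_pos hj, if_pos hj, algebraMap_eq, ← mul_assoc, ← C_mul]
          · have hjL : j = L := by
              apply Fin.ext
              have h1 := j.isLt
              show (j : ℕ) = m - 1
              omega
            rw [if_neg hj, if_neg hj, algebraMap_eq, hjL, mul_one]
        rw [Finset.sum_congr rfl fun j _ => hterm j, ← Finset.sum_mul, hw]
        congr 1
        exact (map_sum (C : Localization.Away r →+* MvPolynomial (Fin m) (Localization.Away r))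
          _ _).symm
      have hval : (aeval (FC9aux.sfun p n ζA L i))
          (X L ^ p - (∑ j : Fin m, C (a (X j)) * X j) ^ p)
          = C (1 - w ^ p) * X L ^ p := by
        rw [map_sub, map_pow, map_pow, aeval_X]
        simp only [FC9aux.sfun]
        rw [if_neg hLk, hsum, mul_pow, ← C_pow, map_sub, C_1]
        ring
      rw [hval]
      refine mul_ne_zero ?_ (pow_ne_zero _ (MvPolynomial.X_ne_zero L))
      rw [Ne, MvPolynomial.C_eq_zero, sub_eq_zero]
      intro h1w
      haveI : NeZero p := ⟨by omega⟩
      have hAprim : IsPrimitiveRoot ζA p := by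
        have hid : ζA = (a.comp MvPolynomial.C) ζ := rfl
        rw [hid]
        exact hprim.map_of_injective (fun x y hxy => MvPolynomial.C_injective _ _ (hainj hxy))
      obtain ⟨l, hl, hlw⟩ := hAprim.eq_pow_of_pow_eq_one h1w.symm
      set i2 : Fin m → Fin p := fun j =>
        ⟨((p - l) + (if (j : ℕ) < n then (i j : ℕ) else 0)) % p, Nat.mod_lt _ hp0⟩ with hi2
      have hfr : (1 - ∑ k : Fin m, C (ζ ^ (i2 k : ℕ)) * X k) ∣ r := by
        rw [hr]
        exact Dvd.dvd.mul_left (Finset.dvd_prod_of_mem _ (Finset.mem_univ i2)) _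
      have hunit : IsUnit (a (1 - ∑ k : Fin m, C (ζ ^ (i2 k : ℕ)) * X k)) := by
        rw [ha]
        exact IsLocalization.Away.isUnit_of_dvd (x := r) (S := Localization.Away r) hfr
      have hzero : a (1 - ∑ k : Fin m, C (ζ ^ (i2 k : ℕ)) * X k) = 0 := by
        rw [map_sub, map_one, map_sum]
        have hterm2 : ∀ j : Fin m, a (C (ζ ^ (i2 j : ℕ)) * X j)
            = ζA ^ (p - l) * (a (X j) * (if (j : ℕ) < n then ζA ^ (i j : ℕ) else 1)) := by
          intro j
          rw [map_mul]
          have he1 : a (C (ζ ^ (i2 j : ℕ))) = ζA ^ (i2 j : ℕ) := (hζApow _).symm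
          rw [he1]
          have he2 : (i2 j : ℕ) = ((p - l) + (if (j : ℕ) < n then (i j : ℕ) else 0)) % p := rfl
          rw [he2, ← FC9aux.pow_mod_eq hζAp, pow_add]
          by_cases hj : (j : ℕ) < n
          · rw [if_pos hj, if_pos hj]; ring
          · rw [if_neg hj, if_neg hj, pow_zero]; ring
        rw [Finset.sum_congr rfl fun j _ => hterm2 j, ← Finset.mul_sum, ← hw, ← hlw, ← pow_add]
        have hpl : p - l + l = p := by omega
        rw [hpl, hζAp, sub_self]
      exact hunit.ne_zero hzero
  · intro htop
    have h1 : (1 : MvPolynomial (Fin m) (Localization.Away r)) ∈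
        Ideal.ofList (List.ofFn M) • (⊤ : Submodule (MvPolynomial (Fin m) (Localization.Away r))
          (MvPolynomial (Fin m) (Localization.Away r))) := by
      rw [← htop]; exact Submodule.mem_top
    rw [smul_eq_mul, Ideal.mul_top] at h1
    have hker : Ideal.ofList (List.ofFn M) ≤ RingHom.ker
        (aeval (fun _ : Fin m => (0 : Localization.Away r)) :
          MvPolynomial (Fin m) (Localization.Away r) →ₐ[Localization.Away r]
            Localization.Away r) := by
      refine Ideal.span_le.mpr ?_
      rintro x hx
      obtain ⟨j, rfl⟩ := List.mem_ofFn.mp hx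
      rw [SetLike.mem_coe, RingHom.mem_ker, hM j]
      split
      · simp only [map_sub, map_pow, aeval_X, sub_self]
      · simp only [map_sub, map_pow, map_sum, map_mul, aeval_X, mul_zero,
          Finset.sum_const_zero, sub_self]
    have h2 := hker h1
    rw [RingHom.mem_ker, map_one] at h2
    exact one_ne_zero h2
end
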